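/- arXiv:2503.18232 — 6 statements merged into one kernel-verified Lean document; each statement's English description precedes it below -/
import Mathlib

section
/- Let n ≥ 2 and suppose Ω ⊆ ℝⁿ is an open set whose topological boundary ∂Ω is an unbounded Ahlfors regular set; set σ := ℋ^{n−1} restricted to ∂Ω. Fix a reference point z ∈ ∂Ω and for R > 0 write A_R := Ω ∩ (B(z,2R) ∖ B(z,R)) and Δ(z,r) := B(z,r) ∩ ∂Ω. Then there exist constants C, M, κ̃ ∈ (0,∞), depending only on n and the Ahlfors regularity constants of ∂Ω, such that for every Lebesgue-measurable function u : Ω → ℝ and every R ∈ (0,∞): ∫_{A_R} |u| dℒⁿ ≤ C·R · ∫_{Δ(z,MR) ∖ Δ(z,R/2)} N^{2R}_{κ̃} u dσ. -/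
open MeasureTheory Metric Set Filter
open scoped ENNReal NNReal Topology

noncomputable section

abbrev Euc (n : ℕ) : Type := EuclideanSpace ℝ (Fin n)

variable {n : ℕ}

/-- The nontangential approach region `Γ_κ(x)` to `∂Ω` from within `Ω`. -/
def ntRegion (Ω : Set (Euc n)) (κ : ℝ) (x : Euc n) : Set (Euc n) :=
  {y | y ∈ Ω ∧ dist x y < (1 + κ) * infDist y (frontier Ω)}

/-- The one-sided collar neighborhood `O_ε` of `∂Ω`. -/
def collar (Ω : Set (Euc n)) (ε : ℝ) : Set (Euc n) :=
  {y | y ∈ Ω ∧ infDist y (frontier Ω) < ε}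

/-- Nontangential maximal function of `u` restricted to a set `S` (truncated version). -/
def ntMaxOn {E : Type*} [NormedAddCommGroup E] (Ω S : Set (Euc n)) (κ : ℝ)
    (u : Euc n → E) (x : Euc n) : ℝ≥0∞ :=
  essSup (fun y => (‖u y‖₊ : ℝ≥0∞)) (volume.restrict (ntRegion Ω κ x ∩ S))

/-- Nontangential maximal function `N_κ u`. -/
def ntMax {E : Type*} [NormedAddCommGroup E] (Ω : Set (Euc n)) (κ : ℝ)
    (u : Euc n → E) (x : Euc n) : ℝ≥0∞ :=
  essSup (fun y => (‖u y‖₊ : ℝ≥0∞)) (volume.restrict (ntRegion Ω κ x))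

/-- `u` has κ-nontangential trace `v` at the boundary point `x`. -/
def HasNTTrace {E : Type*} [NormedAddCommGroup E] (Ω : Set (Euc n)) (κ : ℝ)
    (u : Euc n → E) (x : Euc n) (v : E) : Prop :=
  x ∈ closure (ntRegion Ω κ x) ∧
  ∃ N : Set (Euc n), N ⊆ ntRegion Ω κ x ∧ volume N = 0 ∧
    Tendsto u (nhdsWithin x (ntRegion Ω κ x \ N)) (nhds v)

/-- `Sig` is an Ahlfors regular set (of dimension `n-1`) with constant `C`. -/
def AhlforsRegularWith (n : ℕ) (Sig : Set (Euc n)) (C : ℝ) : Prop :=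
  1 < C ∧ IsClosed Sig ∧ ∀ x ∈ Sig, ∀ r : ℝ, 0 < r →
    ENNReal.ofReal r < 2 * EMetric.diam Sig →
    ENNReal.ofReal (C⁻¹ * r ^ (n - 1)) ≤ μH[(n : ℝ) - 1] (Sig ∩ ball x r) ∧
      μH[(n : ℝ) - 1] (Sig ∩ ball x r) ≤ ENNReal.ofReal (C * r ^ (n - 1))

/-- The measure-theoretic (geometric measure theoretic) boundary `∂*Ω`. -/
def mtBoundary (n : ℕ) (Ω : Set (Euc n)) : Set (Euc n) :=
  {x | 0 < limsup (fun r : ℝ => volume (Ω ∩ ball x r) / ENNReal.ofReal (r ^ n)) (𝓝[>] 0) ∧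
       0 < limsup (fun r : ℝ => volume (Ωᶜ ∩ ball x r) / ENNReal.ofReal (r ^ n)) (𝓝[>] 0)}

/-- The nontangentially accessible boundary `∂_nta Ω`. -/
def ntaBoundary (n : ℕ) (Ω : Set (Euc n)) : Set (Euc n) :=
  {x | x ∈ frontier Ω ∧ ∀ κ : ℝ, 0 < κ → x ∈ closure (ntRegion Ω κ x)}

/-- The Laplacian `Δu = ∑ ∂²u/∂x_j²`, via iterated Fréchet derivatives. -/
def laplacian (u : Euc n → ℝ) (x : Euc n) : ℝ :=
  ∑ i : Fin n, fderiv ℝ (fun z => fderiv ℝ u z (EuclideanSpace.single i 1)) x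
    (EuclideanSpace.single i 1)

/-- `u` is harmonic on the open set `Ω`. -/
def HarmonicOn' (u : Euc n → ℝ) (Ω : Set (Euc n)) : Prop :=
  ContDiffOn ℝ 2 u Ω ∧ ∀ x ∈ Ω, laplacian u x = 0

/-- `w` is (continuous and) subharmonic on the open set `Ω`, via the sub-mean value property. -/
def SubharmonicOn (w : Euc n → ℝ) (Ω : Set (Euc n)) : Prop :=
  ContinuousOn w Ω ∧ ∀ x ∈ Ω, ∀ r : ℝ, 0 < r → closedBall x r ⊆ Ω →
    w x ≤ ⨍ y in ball x r, w y

/-- `Sig` is a uniformly rectifiable (UR) set: closed, Ahlfors regular, with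
Big Pieces of Lipschitz Images. -/
def IsURSet (n : ℕ) (Sig : Set (Euc n)) : Prop :=
  IsClosed Sig ∧ (∃ C : ℝ, AhlforsRegularWith n Sig C) ∧
  ∃ ε : ℝ, 0 < ε ∧ ∃ M₀ : ℝ≥0, ∀ x ∈ Sig, ∀ r : ℝ, 0 < r →
    ENNReal.ofReal r < EMetric.diam Sig →
    ∃ Φ : EuclideanSpace ℝ (Fin (n - 1)) → Euc n, LipschitzWith M₀ Φ ∧
      ENNReal.ofReal (ε * r ^ (n - 1)) ≤
        μH[(n : ℝ) - 1] (Sig ∩ ball x r ∩ Φ '' ball (0 : EuclideanSpace ℝ (Fin (n - 1))) r)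

end

private lemma dyadic_exists {S a : ℝ} (ha : 0 < a) (haS : a < S) :
    ∃ j : ℕ, S * (2⁻¹ : ℝ) ^ (j + 1) ≤ a ∧ a < S * (2⁻¹ : ℝ) ^ j := by
  classical
  have hS : 0 < S := lt_trans ha haS
  have hex : ∃ j : ℕ, S * (2⁻¹ : ℝ) ^ (j + 1) ≤ a := by
    obtain ⟨m, hm⟩ := exists_pow_lt_of_lt_one (div_pos ha hS) (by norm_num : (2⁻¹ : ℝ) < 1)
    have h1 : (2⁻¹ : ℝ) ^ m * S < a := (lt_div_iff₀ hS).1 hm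
    have h2 : (2⁻¹ : ℝ) ^ (m + 1) ≤ (2⁻¹ : ℝ) ^ m :=
      pow_le_pow_of_le_one (by norm_num) (by norm_num) (Nat.le_succ m)
    refine ⟨m, le_of_lt ?_⟩
    calc S * (2⁻¹ : ℝ) ^ (m + 1) ≤ S * (2⁻¹ : ℝ) ^ m :=
          mul_le_mul_of_nonneg_left h2 hS.le
    _ < a := by linarith
  refine ⟨Nat.find hex, Nat.find_spec hex, ?_⟩
  rcases Nat.eq_zero_or_pos (Nat.find hex) with h | h
  · rw [h]; simpa using haS
  · have hmin := Nat.find_min hex (m := Nat.find hex - 1) (by omega)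
    push_neg at hmin
    have hj : Nat.find hex - 1 + 1 = Nat.find hex := by omega
    rw [hj] at hmin
    exact hmin

set_option maxHeartbeats 2000000 in
/-- an integral estimate over dyadic annuli in terms of truncated
nontangential maximal functions, on open sets with unbounded Ahlfors regular boundary,
with constants depending only on `n` and the Ahlfors regularity constant. -/
theorem statement2 (n : ℕ) (hn : 2 ≤ n) (C₀ : ℝ) (hC₀ : 1 < C₀) :
    ∃ C M κ' : ℝ, 0 < C ∧ 0 < M ∧ 0 < κ' ∧
      ∀ Ω : Set (Euc n), IsOpen Ω →
        ¬ Bornology.IsBounded (frontier Ω) →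
        AhlforsRegularWith n (frontier Ω) C₀ →
        ∀ z ∈ frontier Ω, ∀ u : Euc n → ℝ, Measurable u → ∀ R : ℝ, 0 < R →
          ∫⁻ y in Ω ∩ (ball z (2 * R) \ ball z R), (‖u y‖₊ : ℝ≥0∞) ∂volume ≤
            ENNReal.ofReal (C * R) *
              ∫⁻ x in (ball z (M * R) ∩ frontier Ω) \ (ball z (R / 2) ∩ frontier Ω),
                ntMaxOn Ω (collar Ω (2 * R)) κ' u x
                ∂((μH[(n : ℝ) - 1]).restrict (frontier Ω)) := by
  classical
  have hC₀0 : (0:ℝ) < C₀ := lt_trans one_pos hC₀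
  haveI : Nontrivial (Euc n) := by
    have hi : (0:ℕ) < n := by omega
    refine ⟨⟨0, EuclideanSpace.single ⟨0, hi⟩ 1, fun h => ?_⟩⟩
    have h2 := congrArg (fun v : Euc n => v ⟨0, hi⟩) h
    simp [EuclideanSpace.single_apply] at h2
  set ωn : ℝ≥0∞ := volume (ball (0 : Euc n) 1) with hωn
  have hωtop : ωn ≠ ⊤ := measure_ball_lt_top.ne
  set M : ℝ := 2 * C₀ ^ 2 + 3 with hMdef
  set κ : ℝ := 4 * (M + 2) with hκdef
  set C : ℝ := ωn.toReal * (C₀ * 4 ^ (n - 1) + 2 ^ (n + 1) * C₀) + 1 with hCdef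
  have hM3 : (3:ℝ) ≤ M := by nlinarith
  have hM0 : (0:ℝ) < M := by linarith
  have hM1 : (1:ℝ) ≤ M := by linarith
  have hκ1 : (1:ℝ) ≤ κ := by linarith
  have hκ0 : (0:ℝ) < κ := by linarith
  clear_value M κ C
  refine ⟨C, M, κ, ?_, hM0, hκ0, ?_⟩
  · have h1 : 0 ≤ ωn.toReal * (C₀ * 4 ^ (n - 1) + 2 ^ (n + 1) * C₀) :=
      mul_nonneg ENNReal.toReal_nonneg (by positivity)
    rw [hCdef]; linarith
  intro Ω hΩo hΩub hA z hz u hu R hR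
  have hfrC : IsClosed (frontier Ω) := isClosed_frontier
  have hfrNe : (frontier Ω).Nonempty := ⟨z, hz⟩
  have hfrM : MeasurableSet (frontier Ω) := hfrC.measurableSet
  set δ : Euc n → ℝ := fun y => infDist y (frontier Ω) with hδdef
  have hδc : Continuous δ := continuous_infDist_pt _
  have hnotin : ∀ y ∈ Ω, y ∉ frontier Ω := by
    intro y hy h
    rw [hΩo.frontier_eq] at h
    exact h.2 hy
  have hδpos : ∀ y ∈ Ω, 0 < δ y := fun y hy =>
    (hfrC.notMem_iff_infDist_pos hfrNe).1 (hnotin y hy)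
  have hδle : ∀ y : Euc n, δ y ≤ dist y z := fun y => infDist_le_dist_of_mem hz
  have hbd : ∀ x ∈ frontier Ω, ∀ r : ℝ, 0 < r →
      ENNReal.ofReal (C₀⁻¹ * r ^ (n - 1)) ≤ μH[(n : ℝ) - 1] (frontier Ω ∩ ball x r) ∧
      μH[(n : ℝ) - 1] (frontier Ω ∩ ball x r) ≤ ENNReal.ofReal (C₀ * r ^ (n - 1)) := by
    intro x hx r hr
    refine hA.2.2 x hx r hr ?_
    rw [show EMetric.diam (frontier Ω) = ⊤ from ediam_eq_top_iff_unbounded.2 hΩub]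
    have h2 : (2:ℝ≥0∞) * ⊤ = ⊤ := ENNReal.mul_top (by norm_num)
    rw [h2]
    exact ENNReal.ofReal_lt_top
  set σ : Measure (Euc n) := (μH[(n : ℝ) - 1]).restrict (frontier Ω) with hσdef
  set D : Set (Euc n) := (ball z (M * R) ∩ frontier Ω) \ (ball z (R / 2) ∩ frontier Ω)
    with hDdef
  have hDm : MeasurableSet D :=
    (measurableSet_ball.inter hfrM).diff (measurableSet_ball.inter hfrM)
  have hDsub : D ⊆ ball z (M * R) := fun x hx => hx.1.1
  have hDmem : ∀ x, x ∈ frontier Ω → dist x z < M * R → ¬ dist x z < R / 2 → x ∈ D := by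
    intro x h1 h2 h3
    exact ⟨⟨mem_ball.2 h2, h1⟩, fun hc => h3 (mem_ball.1 hc.1)⟩
  set N : Euc n → ℝ≥0∞ := ntMaxOn Ω (collar Ω (2 * R)) κ u with hNdef
  set Reg : Euc n → Set (Euc n) := fun x => ntRegion Ω κ x ∩ collar Ω (2 * R) with hRegdef
  have hRegm : ∀ x, MeasurableSet (Reg x) := by
    intro x
    have h1 : IsOpen (ntRegion Ω κ x) := by
      have he : ntRegion Ω κ x = Ω ∩ {y | dist x y < (1 + κ) * δ y} := rfl
      rw [he]
      exact hΩo.inter (isOpen_lt (continuous_const.dist continuous_id)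
        (continuous_const.mul hδc))
    have h2 : IsOpen (collar Ω (2 * R)) := by
      have he : collar Ω (2 * R) = Ω ∩ {y | δ y < 2 * R} := rfl
      rw [he]
      exact hΩo.inter (isOpen_lt hδc continuous_const)
    exact (h1.inter h2).measurableSet
  have key : ∀ x, ∀ Q : Set (Euc n), Q ⊆ Reg x →
      ∫⁻ y in Q, (‖u y‖₊ : ℝ≥0∞) ∂volume ≤ N x * volume Q := by
    intro x Q hQ
    have h1 : ∀ᵐ y ∂(volume.restrict (Reg x)), (‖u y‖₊ : ℝ≥0∞) ≤ N x :=
      ENNReal.ae_le_essSup _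
    have h2 : ∀ᵐ y ∂(volume.restrict Q), (‖u y‖₊ : ℝ≥0∞) ≤ N x :=
      (ae_mono (Measure.restrict_mono hQ le_rfl)) h1
    calc ∫⁻ y in Q, (‖u y‖₊ : ℝ≥0∞) ∂volume ≤ ∫⁻ _ in Q, N x ∂volume :=
          lintegral_mono_ae h2
    _ = N x * volume Q := setLIntegral_const Q (N x)
  set T : Set (Euc n) := (Ω ∩ (ball z (2 * R) \ ball z R)) ∩ {y | δ y < R / 4} with hTdef
  set Fa : Set (Euc n) := (Ω ∩ (ball z (2 * R) \ ball z R)) ∩ {y | R / 4 ≤ δ y} with hFadef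
  have hTm : MeasurableSet T :=
    (hΩo.measurableSet.inter (measurableSet_ball.diff measurableSet_ball)).inter
      (measurableSet_lt hδc.measurable measurable_const)
  have hgeoT : ∀ y ∈ T, ∀ x, x ∈ frontier Ω → dist x y < 2 * δ y →
      x ∈ D ∧ y ∈ Reg x := by
    intro y hy x hxf hxy
    have hyΩ : y ∈ Ω := hy.1.1
    have hδp : 0 < δ y := hδpos y hyΩ
    have hδ4 : δ y < R / 4 := hy.2
    have hd1 : dist y z < 2 * R := mem_ball.1 hy.1.2.1
    have hd2 : R ≤ dist y z := not_lt.1 fun h => hy.1.2.2 (mem_ball.2 h)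
    have ht1 : dist x z ≤ dist x y + dist y z := dist_triangle x y z
    have ht2 : dist y z ≤ dist y x + dist x z := dist_triangle y x z
    rw [dist_comm y x] at ht2
    have hxz : dist x z < M * R := by nlinarith
    have hxz2 : ¬ dist x z < R / 2 := by
      intro h
      linarith
    refine ⟨hDmem x hxf hxz hxz2, ⟨⟨hyΩ, ?_⟩, ⟨hyΩ, ?_⟩⟩⟩
    · show dist x y < (1 + κ) * δ y
      nlinarith
    · show δ y < 2 * R
      linarith [hδle y]
  set g : Euc n → ℝ≥0∞ :=
    fun y => (‖u y‖₊ : ℝ≥0∞) * (ENNReal.ofReal (C₀⁻¹ * δ y ^ (n - 1)))⁻¹ with hgdef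
  set SS : Euc n → Set (Euc n) :=
    fun y => {x | x ∈ frontier Ω ∧ dist x y < 2 * δ y} with hSSdef
  have hSSm : ∀ y, MeasurableSet (SS y) := by
    intro y
    exact hfrM.inter
      (measurableSet_lt (continuous_id.dist continuous_const).measurable measurable_const)
  set B : Set (Euc n) := ball z (M * R) with hBdef
  have hMR0 : 0 < M * R := mul_pos hM0 hR
  set σ' : Measure (Euc n) := σ.restrict B with hσ'def
  haveI : IsFiniteMeasure σ' := by
    constructor
    rw [hσ'def, Measure.restrict_apply' measurableSet_ball, Set.univ_inter, hσdef,
      Measure.restrict_apply' hfrM, inter_comm]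
    exact lt_of_le_of_lt (hbd z hz (M * R) hMR0).2 ENNReal.ofReal_lt_top
  set Fk : Euc n → Euc n → ℝ≥0∞ :=
    fun x y => T.indicator g y * (SS y).indicator 1 x with hFkdef
  -- Step (a)
  have stepa : ∫⁻ y in T, (‖u y‖₊ : ℝ≥0∞) ∂volume ≤ ∫⁻ y, ∫⁻ x, Fk x y ∂σ' ∂volume := by
    rw [← lintegral_indicator hTm]
    refine lintegral_mono fun y => ?_
    by_cases hyT : y ∈ T
    · rw [indicator_of_mem hyT]
      have hδp : 0 < δ y := hδpos y hyT.1.1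
      have hcpos : 0 < C₀⁻¹ * δ y ^ (n - 1) := by positivity
      have hc0 : ENNReal.ofReal (C₀⁻¹ * δ y ^ (n - 1)) ≠ 0 :=
        (ENNReal.ofReal_pos.2 hcpos).ne'
      have hctop : ENNReal.ofReal (C₀⁻¹ * δ y ^ (n - 1)) ≠ ⊤ := ENNReal.ofReal_ne_top
      have hgtop : T.indicator g y ≠ ⊤ := by
        rw [indicator_of_mem hyT, hgdef]
        exact ENNReal.mul_ne_top ENNReal.coe_ne_top (ENNReal.inv_ne_top.2 hc0)
      have hinner : ∫⁻ x, Fk x y ∂σ' = g y * σ' (SS y) := by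
        simp only [hFkdef]
        rw [lintegral_const_mul' _ _ hgtop, lintegral_indicator_one (hSSm y),
          indicator_of_mem hyT]
      have hSlb : ENNReal.ofReal (C₀⁻¹ * δ y ^ (n - 1)) ≤ σ' (SS y) := by
        obtain ⟨w, hw, hwd⟩ := hfrC.exists_infDist_eq_dist hfrNe y
        have hsub : frontier Ω ∩ ball w (δ y) ⊆ SS y ∩ B := by
          intro x' hx'
          have h1 : dist x' y ≤ dist x' w + dist w y := dist_triangle x' w y
          have h2 : dist x' w < δ y := mem_ball.1 hx'.2
          have h3 : dist w y = δ y := by rw [dist_comm]; exact hwd.symm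
          have hd : dist x' y < 2 * δ y := by linarith
          refine ⟨⟨hx'.1, hd⟩, mem_ball.2 ?_⟩
          have hδ4 : δ y < R / 4 := hyT.2
          have hd1 : dist y z < 2 * R := mem_ball.1 hyT.1.2.1
          have ht : dist x' z ≤ dist x' y + dist y z := dist_triangle x' y z
          nlinarith
        calc ENNReal.ofReal (C₀⁻¹ * δ y ^ (n - 1))
            ≤ μH[(n : ℝ) - 1] (frontier Ω ∩ ball w (δ y)) := (hbd w hw (δ y) hδp).1
        _ ≤ μH[(n : ℝ) - 1] (SS y ∩ B ∩ frontier Ω) :=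
            measure_mono fun x' hx' => ⟨hsub hx', hx'.1⟩
        _ = σ' (SS y) := by
            rw [hσ'def, Measure.restrict_apply' measurableSet_ball, hσdef,
              Measure.restrict_apply' hfrM]
      rw [hinner]
      calc (‖u y‖₊ : ℝ≥0∞)
          = (‖u y‖₊ : ℝ≥0∞) * ((ENNReal.ofReal (C₀⁻¹ * δ y ^ (n - 1)))⁻¹ *
              ENNReal.ofReal (C₀⁻¹ * δ y ^ (n - 1))) := by
            rw [ENNReal.inv_mul_cancel hc0 hctop, mul_one]
      _ ≤ (‖u y‖₊ : ℝ≥0∞) * ((ENNReal.ofReal (C₀⁻¹ * δ y ^ (n - 1)))⁻¹ * σ' (SS y)) :=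
            mul_le_mul_right (mul_le_mul_right hSlb _) _
      _ = g y * σ' (SS y) := by
            simp only [hgdef]
            rw [mul_assoc]
    · rw [indicator_of_notMem hyT]
      exact zero_le
  -- Step (b) : Tonelli
  have hgm : Measurable g := by
    apply Measurable.mul
    · exact hu.nnnorm.coe_nnreal_ennreal
    · exact (ENNReal.measurable_ofReal.comp
        ((hδc.measurable.pow_const (n - 1)).const_mul C₀⁻¹)).inv
  have hWm : MeasurableSet {p : Euc n × Euc n | p.2 ∈ frontier Ω ∧
      dist p.2 p.1 < 2 * δ p.1} := by
    have h1 : MeasurableSet {p : Euc n × Euc n | p.2 ∈ frontier Ω} :=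
      hfrM.preimage measurable_snd
    have h2 : MeasurableSet {p : Euc n × Euc n | dist p.2 p.1 < 2 * δ p.1} :=
      measurableSet_lt (continuous_snd.dist continuous_fst).measurable
        (continuous_const.mul (hδc.comp continuous_fst)).measurable
    exact h1.inter h2
  have hFkm : AEMeasurable (Function.uncurry fun (y x : Euc n) => Fk x y)
      (volume.prod σ') := by
    apply Measurable.aemeasurable
    show Measurable fun p : Euc n × Euc n =>
      T.indicator g p.1 * ({q : Euc n × Euc n | q.2 ∈ frontier Ω ∧
        dist q.2 q.1 < 2 * δ q.1}).indicator 1 p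
    exact ((hgm.indicator hTm).comp measurable_fst).mul (measurable_one.indicator hWm)
  have stepb : ∫⁻ y, ∫⁻ x, Fk x y ∂σ' ∂volume = ∫⁻ x, ∫⁻ y, Fk x y ∂volume ∂σ' :=
    lintegral_lintegral_swap hFkm
  -- Step (c)
  have stepc : ∀ x, ∫⁻ y, Fk x y ∂volume ≤
      D.indicator (fun x' => ωn * ENNReal.ofReal (C₀ * 4 ^ (n - 1)) *
        ENNReal.ofReal R * N x') x := by
    intro x
    by_cases hxD : x ∈ D
    · rw [indicator_of_mem hxD]
      set r : ℕ → ℝ := fun j => R / 2 * (2⁻¹ : ℝ) ^ j with hrdef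
      have hrpos : ∀ j, 0 < r j := fun j =>
        mul_pos (half_pos hR) (pow_pos (by norm_num) j)
      set Q : ℕ → Set (Euc n) :=
        fun j => Reg x ∩ {y | r (j + 1) ≤ dist x y ∧ dist x y < r j} with hQdef
      have hdm : Measurable fun y : Euc n => dist x y :=
        (continuous_const.dist continuous_id).measurable
      have hQm : ∀ j, MeasurableSet (Q j) := fun j =>
        (hRegm x).inter ((measurableSet_le measurable_const hdm).inter
          (measurableSet_lt hdm measurable_const))
      set cst : ℕ → ℝ≥0∞ :=
        fun j => (ENNReal.ofReal (C₀⁻¹ * (r j / 4) ^ (n - 1)))⁻¹ with hcstdef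
      have hcsttop : ∀ j, cst j ≠ ⊤ := by
        intro j
        have := hrpos j
        exact ENNReal.inv_ne_top.2 (ENNReal.ofReal_pos.2 (by positivity)).ne'
      set G : ℕ → Euc n → ℝ≥0∞ :=
        fun j => (Q j).indicator (fun y => (‖u y‖₊ : ℝ≥0∞) * cst j) with hGdef
      have hpt : ∀ y, Fk x y ≤ ∑' j, G j y := by
        intro y
        by_cases hyT : y ∈ T
        · by_cases hxS : x ∈ SS y
          · have hδp : 0 < δ y := hδpos y hyT.1.1
            have hdpos : 0 < dist x y := by
              rw [dist_pos]
              intro he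
              exact hnotin y hyT.1.1 (he ▸ hxS.1)
            have hδ4 : δ y < R / 4 := hyT.2
            have hdlt : dist x y < R / 2 := by
              have := hxS.2
              linarith
            obtain ⟨j, hj1, hj2⟩ := dyadic_exists hdpos hdlt
            have hyQ : y ∈ Q j := ⟨(hgeoT y hyT x hxS.1 hxS.2).2, hj1, hj2⟩
            have hFk : Fk x y = g y := by
              simp only [hFkdef]
              rw [indicator_of_mem hyT, indicator_of_mem hxS, Pi.one_apply, mul_one]
            have hG : G j y = (‖u y‖₊ : ℝ≥0∞) * cst j := indicator_of_mem hyQ _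
            have hr4 : r (j + 1) / 2 = r j / 4 := by
              simp only [hrdef, pow_succ]
              ring
            have hle : g y ≤ (‖u y‖₊ : ℝ≥0∞) * cst j := by
              apply mul_le_mul_right
              apply ENNReal.inv_le_inv.2
              apply ENNReal.ofReal_le_ofReal
              apply mul_le_mul_of_nonneg_left _ (inv_nonneg.2 hC₀0.le)
              apply pow_le_pow_left₀ (by positivity)
              have h2δ : dist x y < 2 * δ y := hxS.2
              have hj1' : r (j + 1) ≤ dist x y := hj1
              linarith
            calc Fk x y = g y := hFk
            _ ≤ (‖u y‖₊ : ℝ≥0∞) * cst j := hle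
            _ = G j y := hG.symm
            _ ≤ ∑' j, G j y := ENNReal.le_tsum j
          · simp only [hFkdef, indicator_of_notMem hxS, mul_zero]
            exact zero_le
        · simp only [hFkdef, indicator_of_notMem hyT, zero_mul]
          exact zero_le
      calc ∫⁻ y, Fk x y ∂volume ≤ ∫⁻ y, ∑' j, G j y ∂volume := lintegral_mono hpt
      _ = ∑' j, ∫⁻ y, G j y ∂volume :=
          lintegral_tsum fun j =>
            ((hu.nnnorm.coe_nnreal_ennreal.mul measurable_const).indicator
              (hQm j)).aemeasurable
      _ ≤ ∑' j, N x * ωn * ENNReal.ofReal (C₀ * 4 ^ (n - 1) * r j) := by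
          apply ENNReal.tsum_le_tsum
          intro j
          have h1 : ∫⁻ y, G j y ∂volume =
              (∫⁻ y in Q j, (‖u y‖₊ : ℝ≥0∞) ∂volume) * cst j := by
            simp only [hGdef]
            rw [lintegral_indicator (hQm j), lintegral_mul_const' _ _ (hcsttop j)]
          rw [h1]
          have h2 : ∫⁻ y in Q j, (‖u y‖₊ : ℝ≥0∞) ∂volume ≤ N x * volume (Q j) :=
            key x _ fun y hy => hy.1
          have h3 : volume (Q j) ≤ ENNReal.ofReal (r j ^ n) * ωn := by
            calc volume (Q j) ≤ volume (ball x (r j)) := by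
                  apply measure_mono
                  intro y hy
                  exact mem_ball.2 (by rw [dist_comm]; exact hy.2.2)
            _ = ENNReal.ofReal (r j ^ n) * ωn := by
                rw [Measure.addHaar_ball volume x (hrpos j).le, finrank_euclideanSpace_fin]
          have h4 : ENNReal.ofReal (r j ^ n) * cst j =
              ENNReal.ofReal (C₀ * 4 ^ (n - 1) * r j) := by
            have hrj := hrpos j
            have hinv : cst j = ENNReal.ofReal ((C₀⁻¹ * (r j / 4) ^ (n - 1))⁻¹) := by
              rw [hcstdef]
              exact (ENNReal.ofReal_inv_of_pos (by positivity)).symm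
            rw [hinv, ← ENNReal.ofReal_mul (by positivity)]
            congr 1
            have hpow : r j ^ n = r j ^ (n - 1) * r j := by
              conv_lhs => rw [show n = n - 1 + 1 by omega]
              rw [pow_succ]
            rw [hpow, div_pow]
            have h4n : (4:ℝ) ^ (n - 1) ≠ 0 := by positivity
            have hrn : r j ^ (n - 1) ≠ 0 := by positivity
            field_simp
          calc (∫⁻ y in Q j, (‖u y‖₊ : ℝ≥0∞) ∂volume) * cst j
              ≤ N x * (ENNReal.ofReal (r j ^ n) * ωn) * cst j :=
                mul_le_mul_left (le_trans h2 (mul_le_mul_right h3 _)) _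
          _ = N x * ωn * (ENNReal.ofReal (r j ^ n) * cst j) := by ring
          _ = N x * ωn * ENNReal.ofReal (C₀ * 4 ^ (n - 1) * r j) := by rw [h4]
      _ ≤ ωn * ENNReal.ofReal (C₀ * 4 ^ (n - 1)) * ENNReal.ofReal R * N x := by
          apply le_of_eq
          have hterm : ∀ j : ℕ, N x * ωn * ENNReal.ofReal (C₀ * 4 ^ (n - 1) * r j) =
              (N x * ωn * ENNReal.ofReal (C₀ * 4 ^ (n - 1) * (R / 2))) *
                (2⁻¹ : ℝ≥0∞) ^ j := by
            intro j
            have e1 : C₀ * 4 ^ (n - 1) * r j =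
                C₀ * 4 ^ (n - 1) * (R / 2) * (2⁻¹ : ℝ) ^ j := by
              simp only [hrdef]; ring
            have e2 : ENNReal.ofReal ((2⁻¹ : ℝ) ^ j) = (2⁻¹ : ℝ≥0∞) ^ j := by
              rw [ENNReal.ofReal_pow (by norm_num), ENNReal.ofReal_inv_of_pos two_pos,
                ENNReal.ofReal_ofNat]
            rw [e1, ENNReal.ofReal_mul (by positivity), e2, ← mul_assoc]
          calc ∑' j, N x * ωn * ENNReal.ofReal (C₀ * 4 ^ (n - 1) * r j)
              = ∑' j, (N x * ωn * ENNReal.ofReal (C₀ * 4 ^ (n - 1) * (R / 2))) *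
                  (2⁻¹ : ℝ≥0∞) ^ j := by
                exact tsum_congr hterm
          _ = (N x * ωn * ENNReal.ofReal (C₀ * 4 ^ (n - 1) * (R / 2))) *
                ∑' j : ℕ, (2⁻¹ : ℝ≥0∞) ^ j := ENNReal.tsum_mul_left
          _ = (N x * ωn * ENNReal.ofReal (C₀ * 4 ^ (n - 1) * (R / 2))) * 2 := by
                rw [ENNReal.tsum_geometric, ENNReal.one_sub_inv_two, inv_inv]
          _ = ωn * ENNReal.ofReal (C₀ * 4 ^ (n - 1)) * ENNReal.ofReal R * N x := by
                rw [ENNReal.ofReal_mul (by positivity)]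
                have e3 : ENNReal.ofReal (R / 2) * 2 = ENNReal.ofReal R := by
                  rw [show ((2:ℝ≥0∞)) = ENNReal.ofReal (2:ℝ) by
                      rw [ENNReal.ofReal_ofNat],
                    ← ENNReal.ofReal_mul (by positivity)]
                  norm_num
                calc N x * ωn * (ENNReal.ofReal (C₀ * 4 ^ (n - 1)) *
                      ENNReal.ofReal (R / 2)) * 2
                    = N x * ωn * ENNReal.ofReal (C₀ * 4 ^ (n - 1)) *
                        (ENNReal.ofReal (R / 2) * 2) := by ring
                _ = N x * ωn * ENNReal.ofReal (C₀ * 4 ^ (n - 1)) *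
                      ENNReal.ofReal R := by rw [e3]
                _ = ωn * ENNReal.ofReal (C₀ * 4 ^ (n - 1)) * ENNReal.ofReal R *
                      N x := by ring
    · rw [indicator_of_notMem hxD]
      have hz0 : ∀ y, Fk x y = 0 := by
        intro y
        by_cases hyT : y ∈ T
        · by_cases hxS : x ∈ SS y
          · exact absurd (hgeoT y hyT x hxS.1 hxS.2).1 hxD
          · simp only [hFkdef, indicator_of_notMem hxS, mul_zero]
        · simp only [hFkdef, indicator_of_notMem hyT, zero_mul]
      simp only [hz0, lintegral_zero, le_refl]
  -- Step (d)
  have hKtop : ωn * ENNReal.ofReal (C₀ * 4 ^ (n - 1)) * ENNReal.ofReal R ≠ ⊤ :=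
    ENNReal.mul_ne_top (ENNReal.mul_ne_top hωtop ENNReal.ofReal_ne_top)
      ENNReal.ofReal_ne_top
  have stepd : ∫⁻ x, D.indicator (fun x' => ωn * ENNReal.ofReal (C₀ * 4 ^ (n - 1)) *
        ENNReal.ofReal R * N x') x ∂σ' =
      ωn * ENNReal.ofReal (C₀ * 4 ^ (n - 1)) * ENNReal.ofReal R *
        ∫⁻ x in D, N x ∂σ := by
    rw [lintegral_indicator hDm, lintegral_const_mul' _ _ hKtop]
    congr 1
    show ∫⁻ x in D, N x ∂(σ.restrict B) = ∫⁻ x in D, N x ∂σ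
    rw [Measure.restrict_restrict hDm, inter_eq_left.2 hDsub]
  have thin : ∫⁻ y in T, (‖u y‖₊ : ℝ≥0∞) ∂volume ≤
      ωn * ENNReal.ofReal (C₀ * 4 ^ (n - 1)) * ENNReal.ofReal R *
        ∫⁻ x in D, N x ∂σ := by
    calc ∫⁻ y in T, (‖u y‖₊ : ℝ≥0∞) ∂volume
        ≤ ∫⁻ y, ∫⁻ x, Fk x y ∂σ' ∂volume := stepa
    _ = ∫⁻ x, ∫⁻ y, Fk x y ∂volume ∂σ' := stepb
    _ ≤ ∫⁻ x, D.indicator (fun x' => ωn * ENNReal.ofReal (C₀ * 4 ^ (n - 1)) *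
          ENNReal.ofReal R * N x') x ∂σ' := lintegral_mono stepc
    _ = _ := stepd
  -- Fat part
  have hFasub : ∀ x ∈ D, Fa ⊆ Reg x := by
    intro x hxD y hy
    have hyΩ : y ∈ Ω := hy.1.1
    have hd2R : dist y z < 2 * R := mem_ball.1 hy.1.2.1
    have hδ4 : R / 4 ≤ δ y := hy.2
    have hxz : dist x z < M * R := mem_ball.1 hxD.1.1
    have hxy : dist x y ≤ dist x z + dist z y := dist_triangle x z y
    rw [dist_comm z y] at hxy
    have hκR : κ * (R / 4) = (M + 2) * R := by rw [hκdef]; ring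
    have h5 : (1 + κ) * (R / 4) ≤ (1 + κ) * δ y :=
      mul_le_mul_of_nonneg_left hδ4 (by linarith)
    refine ⟨⟨hyΩ, ?_⟩, ⟨hyΩ, ?_⟩⟩
    · show dist x y < (1 + κ) * δ y
      have h6 : (1 + κ) * (R / 4) = R / 4 + κ * (R / 4) := by ring
      have hMR2 : (M + 2) * R = M * R + 2 * R := by ring
      have h7 : dist x y < (M + 2) * R := by rw [hMR2]; linarith
      linarith [h5, h6, h7, hκR]
    · show δ y < 2 * R
      linarith [hδle y]
  set v : ℝ≥0∞ := ENNReal.ofReal ((2 * R) ^ n) * ωn with hvdef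
  have hvtop : v ≠ ⊤ := ENNReal.mul_ne_top ENNReal.ofReal_ne_top hωtop
  have hFav : ∀ x ∈ D, ∫⁻ y in Fa, (‖u y‖₊ : ℝ≥0∞) ∂volume ≤ v * N x := by
    intro x hxD
    calc ∫⁻ y in Fa, (‖u y‖₊ : ℝ≥0∞) ∂volume ≤ N x * volume Fa :=
          key x Fa (hFasub x hxD)
    _ ≤ N x * (ENNReal.ofReal ((2 * R) ^ n) * ωn) := by
        apply mul_le_mul_right
        calc volume Fa ≤ volume (ball z (2 * R)) := measure_mono fun y hy => hy.1.2.1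
        _ = ENNReal.ofReal ((2 * R) ^ n) * ωn := by
            rw [Measure.addHaar_ball volume z (by linarith : (0:ℝ) ≤ 2 * R),
              finrank_euclideanSpace_fin]
    _ = v * N x := by rw [hvdef]; ring
  set a : ℝ≥0∞ := ∫⁻ y in Fa, (‖u y‖₊ : ℝ≥0∞) ∂volume with hadef
  have h1 : a * σ D ≤ v * ∫⁻ x in D, N x ∂σ := by
    have e1 : a * σ D = ∫⁻ x, D.indicator (fun _ => a) x ∂σ := by
      rw [lintegral_indicator hDm, setLIntegral_const]
    rw [e1]
    calc ∫⁻ x, D.indicator (fun _ => a) x ∂σ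
        ≤ ∫⁻ x, D.indicator (fun x' => v * N x') x ∂σ := by
          apply lintegral_mono
          intro x
          by_cases hxD : x ∈ D
          · rw [indicator_of_mem hxD, indicator_of_mem hxD]
            exact hFav x hxD
          · rw [indicator_of_notMem hxD, indicator_of_notMem hxD]
    _ = v * ∫⁻ x in D, N x ∂σ := by
        rw [lintegral_indicator hDm, lintegral_const_mul' _ _ hvtop]
  have hσD : ENNReal.ofReal (2⁻¹ * (C₀⁻¹ * (M * R) ^ (n - 1))) ≤ σ D := by
    have hup : σ (ball z (R / 2) ∩ frontier Ω) ≤ ENNReal.ofReal (C₀ * (R / 2) ^ (n - 1)) := by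
      rw [hσdef, Measure.restrict_apply' hfrM]
      calc μH[(n : ℝ) - 1] (ball z (R / 2) ∩ frontier Ω ∩ frontier Ω)
          ≤ μH[(n : ℝ) - 1] (frontier Ω ∩ ball z (R / 2)) :=
            measure_mono fun t ht => ⟨ht.1.2, ht.1.1⟩
      _ ≤ _ := (hbd z hz (R / 2) (half_pos hR)).2
    have hlow : ENNReal.ofReal (C₀⁻¹ * (M * R) ^ (n - 1)) ≤
        σ (ball z (M * R) ∩ frontier Ω) := by
      rw [hσdef, Measure.restrict_apply' hfrM]
      calc ENNReal.ofReal (C₀⁻¹ * (M * R) ^ (n - 1))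
          ≤ μH[(n : ℝ) - 1] (frontier Ω ∩ ball z (M * R)) := (hbd z hz _ hMR0).1
      _ ≤ μH[(n : ℝ) - 1] (ball z (M * R) ∩ frontier Ω ∩ frontier Ω) :=
            measure_mono fun t ht => ⟨⟨ht.2, ht.1⟩, ht.1⟩
    have hsplit : σ (ball z (M * R) ∩ frontier Ω) ≤
        σ D + σ (ball z (R / 2) ∩ frontier Ω) := by
      calc σ (ball z (M * R) ∩ frontier Ω)
          ≤ σ (D ∪ (ball z (R / 2) ∩ frontier Ω)) := by
            apply measure_mono
            intro t ht
            by_cases h : t ∈ ball z (R / 2) ∩ frontier Ω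
            · exact Or.inr h
            · exact Or.inl ⟨ht, h⟩
      _ ≤ σ D + σ (ball z (R / 2) ∩ frontier Ω) := measure_union_le _ _
    have h2n : (2:ℝ) ≤ 2 ^ (n - 1) := le_self_pow₀ one_le_two (by omega)
    have hMn : M ≤ M ^ (n - 1) := le_self_pow₀ hM1 (by omega)
    have hRn : (0:ℝ) ≤ R ^ (n - 1) := by positivity
    have hreal2 : C₀ * (R / 2) ^ (n - 1) ≤ 2⁻¹ * (C₀⁻¹ * (M * R) ^ (n - 1)) := by
      have e1 : C₀ * (R / 2) ^ (n - 1) = C₀ / 2 ^ (n - 1) * R ^ (n - 1) := by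
        rw [div_pow]; ring
      have e2 : 2⁻¹ * (C₀⁻¹ * (M * R) ^ (n - 1)) =
          2⁻¹ * C₀⁻¹ * M ^ (n - 1) * R ^ (n - 1) := by
        rw [mul_pow]; ring
      have h3 : C₀ / 2 ^ (n - 1) ≤ C₀ / 2 :=
        div_le_div_of_nonneg_left hC₀0.le (by norm_num) h2n
      have h5 : C₀ / 2 ≤ 2⁻¹ * C₀⁻¹ * M := by
        rw [hMdef, div_le_iff₀ (by norm_num : (0:ℝ) < 2)]
        have : 2⁻¹ * C₀⁻¹ * (2 * C₀ ^ 2 + 3) * 2 = 2 * C₀ + 3 * C₀⁻¹ := by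
          field_simp
        rw [this]
        have h6 : 0 < C₀⁻¹ := inv_pos.2 hC₀0
        nlinarith
      have h4 : 2⁻¹ * C₀⁻¹ * M ≤ 2⁻¹ * C₀⁻¹ * M ^ (n - 1) :=
        mul_le_mul_of_nonneg_left hMn (by positivity)
      rw [e1, e2]
      apply mul_le_mul_of_nonneg_right _ hRn
      linarith
    have hchain : ENNReal.ofReal (2⁻¹ * (C₀⁻¹ * (M * R) ^ (n - 1))) +
        ENNReal.ofReal (C₀ * (R / 2) ^ (n - 1)) ≤
        σ D + ENNReal.ofReal (C₀ * (R / 2) ^ (n - 1)) := by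
      calc ENNReal.ofReal (2⁻¹ * (C₀⁻¹ * (M * R) ^ (n - 1))) +
            ENNReal.ofReal (C₀ * (R / 2) ^ (n - 1))
          = ENNReal.ofReal (2⁻¹ * (C₀⁻¹ * (M * R) ^ (n - 1)) +
              C₀ * (R / 2) ^ (n - 1)) :=
            (ENNReal.ofReal_add (by positivity) (by positivity)).symm
      _ ≤ ENNReal.ofReal (C₀⁻¹ * (M * R) ^ (n - 1)) := by
            apply ENNReal.ofReal_le_ofReal
            linarith
      _ ≤ σ (ball z (M * R) ∩ frontier Ω) := hlow
      _ ≤ σ D + σ (ball z (R / 2) ∩ frontier Ω) := hsplit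
      _ ≤ σ D + ENNReal.ofReal (C₀ * (R / 2) ^ (n - 1)) := add_le_add_right hup _
    exact (ENNReal.add_le_add_iff_right ENNReal.ofReal_ne_top).1 hchain
  set s₀ : ℝ≥0∞ := ENNReal.ofReal (2⁻¹ * (C₀⁻¹ * (M * R) ^ (n - 1))) with hs₀def
  have hs₀pos : 0 < 2⁻¹ * (C₀⁻¹ * (M * R) ^ (n - 1)) := by positivity
  have hs₀0 : s₀ ≠ 0 := (ENNReal.ofReal_pos.2 hs₀pos).ne'
  have hs₀top : s₀ ≠ ⊤ := ENNReal.ofReal_ne_top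
  have fat : a ≤ ωn * ENNReal.ofReal (2 ^ (n + 1) * C₀) * ENNReal.ofReal R *
      ∫⁻ x in D, N x ∂σ := by
    have h2 : a * s₀ ≤ v * ∫⁻ x in D, N x ∂σ := le_trans (mul_le_mul_right hσD a) h1
    have h3 : a ≤ v * s₀⁻¹ * ∫⁻ x in D, N x ∂σ := by
      have h4 := mul_le_mul_left h2 s₀⁻¹
      rw [mul_assoc, ENNReal.mul_inv_cancel hs₀0 hs₀top, mul_one] at h4
      refine le_trans h4 (le_of_eq ?_)
      ring
    refine le_trans h3 (mul_le_mul_left ?_ _)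
    have hinv : s₀⁻¹ = ENNReal.ofReal ((2⁻¹ * (C₀⁻¹ * (M * R) ^ (n - 1)))⁻¹) := by
      rw [hs₀def]
      exact (ENNReal.ofReal_inv_of_pos hs₀pos).symm
    have hMn1 : (1:ℝ) ≤ M ^ (n - 1) := one_le_pow₀ hM1
    have hrkey : (2 * R) ^ n * (2⁻¹ * (C₀⁻¹ * (M * R) ^ (n - 1)))⁻¹ =
        2 ^ (n + 1) * C₀ * R / M ^ (n - 1) := by
      have hpowR : R ^ n = R ^ (n - 1) * R := by
        conv_lhs => rw [show n = n - 1 + 1 by omega]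
        rw [pow_succ]
      have hpow2 : (2:ℝ) ^ (n + 1) = 2 ^ n * 2 := pow_succ 2 n
      rw [mul_pow, mul_pow, hpowR, hpow2]
      have hMn0 : M ^ (n - 1) ≠ 0 := by positivity
      have hRn0 : R ^ (n - 1) ≠ 0 := by positivity
      field_simp
    calc v * s₀⁻¹
        = ωn * (ENNReal.ofReal ((2 * R) ^ n) *
            ENNReal.ofReal ((2⁻¹ * (C₀⁻¹ * (M * R) ^ (n - 1)))⁻¹)) := by
          rw [hvdef, hinv]; ring
    _ = ωn * ENNReal.ofReal ((2 * R) ^ n * (2⁻¹ * (C₀⁻¹ * (M * R) ^ (n - 1)))⁻¹) := by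
          rw [← ENNReal.ofReal_mul (by positivity)]
    _ ≤ ωn * ENNReal.ofReal (2 ^ (n + 1) * C₀ * R) := by
          apply mul_le_mul_right
          apply ENNReal.ofReal_le_ofReal
          rw [hrkey]
          exact div_le_self (by positivity) hMn1
    _ = ωn * ENNReal.ofReal (2 ^ (n + 1) * C₀) * ENNReal.ofReal R := by
          rw [ENNReal.ofReal_mul (by positivity), ← mul_assoc]
  -- Combine
  have hcover : Ω ∩ (ball z (2 * R) \ ball z R) ⊆ T ∪ Fa := by
    intro y hy
    by_cases h : δ y < R / 4
    · exact Or.inl ⟨hy, h⟩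
    · exact Or.inr ⟨hy, not_lt.1 h⟩
  have hC0le : 0 ≤ C := by
    have h1 : 0 ≤ ωn.toReal * (C₀ * 4 ^ (n - 1) + 2 ^ (n + 1) * C₀) :=
      mul_nonneg ENNReal.toReal_nonneg (by positivity)
    rw [hCdef]; linarith
  calc ∫⁻ y in Ω ∩ (ball z (2 * R) \ ball z R), (‖u y‖₊ : ℝ≥0∞) ∂volume
      ≤ ∫⁻ y in T ∪ Fa, (‖u y‖₊ : ℝ≥0∞) ∂volume := lintegral_mono_set hcover
  _ ≤ ∫⁻ y in T, (‖u y‖₊ : ℝ≥0∞) ∂volume + ∫⁻ y in Fa, (‖u y‖₊ : ℝ≥0∞) ∂volume :=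
        lintegral_union_le _ _ _
  _ ≤ ωn * ENNReal.ofReal (C₀ * 4 ^ (n - 1)) * ENNReal.ofReal R * ∫⁻ x in D, N x ∂σ +
        ωn * ENNReal.ofReal (2 ^ (n + 1) * C₀) * ENNReal.ofReal R *
          ∫⁻ x in D, N x ∂σ := add_le_add thin fat
  _ = ωn * (ENNReal.ofReal (C₀ * 4 ^ (n - 1)) + ENNReal.ofReal (2 ^ (n + 1) * C₀)) *
        (ENNReal.ofReal R * ∫⁻ x in D, N x ∂σ) := by ring
  _ ≤ ENNReal.ofReal (C * R) * ∫⁻ x in D, N x ∂σ := by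
      rw [← ENNReal.ofReal_add (by positivity) (by positivity)]
      have hle : ωn * ENNReal.ofReal (C₀ * 4 ^ (n - 1) + 2 ^ (n + 1) * C₀) ≤
          ENNReal.ofReal C := by
        conv_lhs => rw [← ENNReal.ofReal_toReal hωtop]
        rw [← ENNReal.ofReal_mul ENNReal.toReal_nonneg]
        apply ENNReal.ofReal_le_ofReal
        rw [hCdef]
        linarith
      calc ωn * ENNReal.ofReal (C₀ * 4 ^ (n - 1) + 2 ^ (n + 1) * C₀) *
            (ENNReal.ofReal R * ∫⁻ x in D, N x ∂σ)
          ≤ ENNReal.ofReal C * (ENNReal.ofReal R * ∫⁻ x in D, N x ∂σ) :=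
            mul_le_mul_left hle _
      _ = ENNReal.ofReal (C * R) * ∫⁻ x in D, N x ∂σ := by
            rw [← mul_assoc, ← ENNReal.ofReal_mul hC0le]
end

section
/- Let n ≥ 2 and let Ω ⊊ ℝⁿ be a nonempty open set whose boundary ∂Ω is unbounded and lower Ahlfors regular, i.e., there is c > 0 with ℋ^{n−1}(∂Ω ∩ B(x,r)) ≥ c·r^{n−1} for all x ∈ ∂Ω and r ∈ (0,∞); set σ := ℋ^{n−1} restricted to ∂Ω. Fix κ ∈ (0,∞) and q ∈ [1,∞). Then there exists a constant C ∈ (0,∞), depending only on n, c, κ, q, such that for every continuous function u : Ω → ℝ and every x ∈ Ω one has |u(x)| ≤ C · dist(x,∂Ω)^{−(n−1)/q} · ‖N_κ u‖_{L^q(∂Ω,σ)}. -/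
open MeasureTheory Metric Set Filter
open scoped ENNReal NNReal Topology

lemma essSup_nnnorm_ge_of_continuousAt {n : ℕ} {u : Euc n → ℝ} {x : Euc n} {U : Set (Euc n)}
    (hU : IsOpen U) (hx : x ∈ U) (hu : ContinuousAt u x) :
    (‖u x‖₊ : ℝ≥0∞) ≤ essSup (fun y => (‖u y‖₊ : ℝ≥0∞)) (volume.restrict U) := by
  by_contra h
  push_neg at h
  obtain ⟨t, ht1, ht2⟩ := exists_between h
  have hcont : ContinuousAt (fun y => (‖u y‖₊ : ℝ≥0∞)) x :=
    ENNReal.continuous_coe.continuousAt.comp hu.nnnorm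
  have hev : {y | t < (‖u y‖₊ : ℝ≥0∞)} ∈ 𝓝 x := hcont (Ioi_mem_nhds ht2)
  have hmem : {y | t < (‖u y‖₊ : ℝ≥0∞)} ∩ U ∈ 𝓝 x := inter_mem hev (hU.mem_nhds hx)
  obtain ⟨ρ, hρ, hball⟩ := Metric.mem_nhds_iff.mp hmem
  have hae : ∀ᵐ y ∂(volume.restrict U),
      (‖u y‖₊ : ℝ≥0∞) ≤ essSup (fun y => (‖u y‖₊ : ℝ≥0∞)) (volume.restrict U) :=
    ENNReal.ae_le_essSup _
  rw [ae_iff] at hae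
  have hsub : ball x ρ ⊆ {y | ¬ (‖u y‖₊ : ℝ≥0∞) ≤
      essSup (fun y => (‖u y‖₊ : ℝ≥0∞)) (volume.restrict U)} := by
    intro y hy
    have : t < (‖u y‖₊ : ℝ≥0∞) := (hball hy).1
    exact not_le.mpr (lt_trans ht1 this)
  have h0 : (volume.restrict U) (ball x ρ) = 0 :=
    measure_mono_null hsub hae
  rw [Measure.restrict_apply measurableSet_ball,
    inter_eq_self_of_subset_left (fun y hy => (hball hy).2)] at h0
  exact (measure_ball_pos volume x hρ).ne' h0

/-- a pointwise bound for continuous functions on an open set with unbounded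
lower Ahlfors regular boundary, in terms of the `L^q` norm of the nontangential maximal
function, with a constant depending only on `n`, `c`, `κ`, `q`. -/
theorem statement5 (n : ℕ) (hn : 2 ≤ n) (c : ℝ) (hc : 0 < c) (κ : ℝ) (hκ : 0 < κ)
    (q : ℝ) (hq : 1 ≤ q) :
    ∃ C : ℝ, 0 < C ∧
      ∀ Ω : Set (Euc n), IsOpen Ω → Ω.Nonempty → Ω ≠ univ →
        ¬ Bornology.IsBounded (frontier Ω) →
        (∀ x ∈ frontier Ω, ∀ r : ℝ, 0 < r →
          ENNReal.ofReal (c * r ^ (n - 1)) ≤ μH[(n : ℝ) - 1] (frontier Ω ∩ ball x r)) →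
        ∀ u : Euc n → ℝ, ContinuousOn u Ω → ∀ x ∈ Ω,
          (‖u x‖₊ : ℝ≥0∞) ≤
            ENNReal.ofReal (C * infDist x (frontier Ω) ^ (-((n : ℝ) - 1) / q)) *
              (∫⁻ z, (ntMax Ω κ u z) ^ q
                ∂((μH[(n : ℝ) - 1]).restrict (frontier Ω))) ^ (1 / q) := by
  have hq0 : (0:ℝ) < q := lt_of_lt_of_le one_pos hq
  set C : ℝ := (c * κ ^ (n - 1)) ^ (-(1/q)) with hC
  have hCpos : 0 < C := Real.rpow_pos_of_pos (by positivity) _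
  refine ⟨C, hCpos, ?_⟩
  intro Ω hΩ hne hnuniv _hunb hAhl u hu x hx
  set F := frontier Ω with hFdef
  have hFc : IsClosed F := isClosed_frontier
  have hFne : F.Nonempty := nonempty_frontier_iff.mpr ⟨hne, hnuniv⟩
  have hxF : x ∉ F := fun h => ((hΩ.frontier_eq ▸ h : x ∈ closure Ω \ Ω).2 hx)
  have hδ : 0 < infDist x F := (hFc.notMem_iff_infDist_pos hFne).mp hxF
  set δ := infDist x F with hδdef
  obtain ⟨w, hwF, hwd⟩ := hFc.exists_infDist_eq_dist hFne x
  set r := κ * δ with hrdef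
  have hr : 0 < r := mul_pos hκ hδ
  -- Key pointwise bound
  have hkey : ∀ z ∈ F ∩ ball w r, (‖u x‖₊ : ℝ≥0∞) ≤ ntMax Ω κ u z := by
    intro z hz
    have hopen : IsOpen (ntRegion Ω κ z) := by
      have : ntRegion Ω κ z = Ω ∩ {y | dist z y < (1 + κ) * infDist y (frontier Ω)} := rfl
      rw [this]
      exact hΩ.inter (isOpen_lt (continuous_const.dist continuous_id)
        (continuous_const.mul (continuous_infDist_pt _)))
    have hxz : x ∈ ntRegion Ω κ z := by
      refine ⟨hx, ?_⟩
      have h1 : dist z x ≤ dist z w + dist w x := dist_triangle z w x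
      have h2 : dist z w < r := mem_ball.mp hz.2
      have h3 : dist w x = δ := by rw [dist_comm]; exact hwd.symm
      have : dist z x < r + δ := by
        calc dist z x ≤ dist z w + dist w x := h1
        _ < r + δ := by rw [h3]; exact add_lt_add_left h2 δ
      calc dist z x < r + δ := this
        _ = (1 + κ) * infDist x (frontier Ω) := by rw [← hδdef, hrdef]; ring
    exact essSup_nnnorm_ge_of_continuousAt hopen hxz (hu.continuousAt (hΩ.mem_nhds hx))
  -- Integral lower bound
  set μ : Measure (Euc n) := μH[(n : ℝ) - 1] with hμdef
  set I := ∫⁻ z, (ntMax Ω κ u z) ^ q ∂(μ.restrict F) with hIdef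
  have hsmeas : MeasurableSet (F ∩ ball w r) := (hFc.measurableSet).inter measurableSet_ball
  have hlow : (‖u x‖₊ : ℝ≥0∞) ^ q * ENNReal.ofReal (c * r ^ (n - 1)) ≤ I := by
    have h1 : (‖u x‖₊ : ℝ≥0∞) ^ q * μ (F ∩ ball w r)
        ≤ ∫⁻ z in F ∩ ball w r, (ntMax Ω κ u z) ^ q ∂μ := by
      rw [← setLIntegral_const]
      refine lintegral_mono_ae ?_
      filter_upwards [ae_restrict_mem hsmeas] with z hz
      exact ENNReal.rpow_le_rpow (hkey z hz) hq0.le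
    have h2 : ∫⁻ z in F ∩ ball w r, (ntMax Ω κ u z) ^ q ∂μ ≤ I :=
      lintegral_mono' (Measure.restrict_mono inter_subset_left le_rfl) le_rfl
    calc (‖u x‖₊ : ℝ≥0∞) ^ q * ENNReal.ofReal (c * r ^ (n - 1))
        ≤ (‖u x‖₊ : ℝ≥0∞) ^ q * μ (F ∩ ball w r) :=
          mul_le_mul_right (hAhl w hwF r hr) _
      _ ≤ I := h1.trans h2
  -- Conclude
  have hMpos : (0:ℝ) < c * r ^ (n - 1) := by positivity
  set M := ENNReal.ofReal (c * r ^ (n - 1)) with hMdef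
  have hM0 : M ≠ 0 := by simp [hMdef, hMpos]
  have hMtop : M ≠ ⊤ := ENNReal.ofReal_ne_top
  have hA : (‖u x‖₊ : ℝ≥0∞) ^ q ≤ I / M := ENNReal.le_div_iff_mul_le (Or.inl hM0) (Or.inl hMtop) |>.mpr hlow
  have hA2 : (‖u x‖₊ : ℝ≥0∞) ≤ (I / M) ^ (1/q) := by
    have := ENNReal.rpow_le_rpow hA (by positivity : (0:ℝ) ≤ 1/q)
    rwa [← ENNReal.rpow_mul, mul_one_div, div_self hq0.ne', ENNReal.rpow_one] at this
  have hsplit : (I / M) ^ (1/q) = M ^ (-(1/q)) * I ^ (1/q) := by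
    rw [div_eq_mul_inv, mul_comm, ENNReal.mul_rpow_of_nonneg _ _ (by positivity : (0:ℝ) ≤ 1/q),
      ENNReal.inv_rpow, ← ENNReal.rpow_neg]
  have hMneg : M ^ (-(1/q)) = ENNReal.ofReal (C * δ ^ (-((n : ℝ) - 1) / q)) := by
    rw [hMdef, ENNReal.ofReal_rpow_of_pos hMpos]
    congr 1
    have hcast : ((n - 1 : ℕ) : ℝ) = (n : ℝ) - 1 := by
      have : (1:ℕ) ≤ n := le_trans one_le_two hn
      push_cast [this]; ring
    rw [hrdef, mul_pow, ← mul_assoc,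
      Real.mul_rpow (by positivity) (by positivity), hC]
    congr 1
    rw [← Real.rpow_natCast δ (n-1), ← Real.rpow_mul hδ.le, hcast]
    congr 1
    ring
  calc (‖u x‖₊ : ℝ≥0∞) ≤ (I / M) ^ (1/q) := hA2
    _ = ENNReal.ofReal (C * δ ^ (-((n : ℝ) - 1) / q)) * I ^ (1/q) := by
        rw [hsplit, hMneg]
end

section
/- Let n ≥ 2 and let Ω ⊊ ℝⁿ be a nonempty open set whose boundary ∂Ω is unbounded and lower Ahlfors regular, i.e., there is c > 0 with ℋ^{n−1}(∂Ω ∩ B(x,r)) ≥ c·r^{n−1} for all x ∈ ∂Ω and r ∈ (0,∞); set σ := ℋ^{n−1} restricted to ∂Ω. Fix κ > 0, q ∈ [1,∞), and let u : Ω → ℝ be continuous with N_κ u ∈ L^q(∂Ω,σ). Then for every 0 < a ≤ b < ∞ one has u(x) → 0 as |x| → ∞ within the slab { x ∈ Ω : a ≤ dist(x,∂Ω) ≤ b }; i.e., for every δ > 0 there is R > 0 such that |u(x)| ≤ δ whenever x ∈ Ω, |x| ≥ R, and a ≤ dist(x,∂Ω) ≤ b. -/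
open MeasureTheory Metric Set Filter
open scoped ENNReal NNReal Topology

private lemma ntRegion_open {n : ℕ} (Ω : Set (Euc n)) (hΩ : IsOpen Ω) (κ : ℝ) (x : Euc n) :
    IsOpen (ntRegion Ω κ x) := by
  have heq : ntRegion Ω κ x = Ω ∩ {y | dist x y < (1 + κ) * infDist y (frontier Ω)} := by
    ext y; simp [ntRegion, Set.mem_inter_iff]
  rw [heq]
  exact hΩ.inter (isOpen_lt (continuous_const.dist continuous_id)
    (continuous_const.mul (continuous_infDist_pt _)))

private lemma ofReal_le_ntMax {n : ℕ} {Ω : Set (Euc n)} (hΩ : IsOpen Ω) {κ : ℝ}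
    {u : Euc n → ℝ} (hu : ContinuousOn u Ω) {x w : Euc n} {δ : ℝ}
    (hx : x ∈ ntRegion Ω κ w) (hδu : δ < |u x|) :
    ENNReal.ofReal δ ≤ ntMax Ω κ u w := by
  have hxΩ : x ∈ Ω := hx.1
  have hca : ContinuousAt (fun y => |u y|) x := (hu.continuousAt (hΩ.mem_nhds hxΩ)).abs
  have h1 : {y | δ < |u y|} ∈ 𝓝 x := hca (Ioi_mem_nhds hδu)
  have hV : IsOpen (ntRegion Ω κ w) := ntRegion_open Ω hΩ κ w
  have h2 : ntRegion Ω κ w ∈ 𝓝 x := hV.mem_nhds hx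
  set W := ntRegion Ω κ w ∩ {y | δ < |u y|} with hW
  have hWn : W ∈ 𝓝 x := inter_mem h2 h1
  have hpos : 0 < volume W := by
    have hxi : x ∈ interior W := mem_interior_iff_mem_nhds.2 hWn
    calc (0:ℝ≥0∞) < volume (interior W) := isOpen_interior.measure_pos volume ⟨x, hxi⟩
      _ ≤ volume W := measure_mono interior_subset
  by_contra hcon
  push_neg at hcon
  have hae : ∀ᵐ y ∂(volume.restrict (ntRegion Ω κ w)),
      (‖u y‖₊ : ℝ≥0∞) ≤ ntMax Ω κ u w :=
    ae_le_essSup (μ := volume.restrict (ntRegion Ω κ w)) (f := fun y => (‖u y‖₊ : ℝ≥0∞))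
  rw [ae_iff] at hae
  have hsub : W ⊆ {y | ¬ ((‖u y‖₊ : ℝ≥0∞) ≤ ntMax Ω κ u w)} := by
    intro y hy
    have hδy : ENNReal.ofReal δ ≤ (‖u y‖₊ : ℝ≥0∞) := by
      rw [← enorm_eq_nnnorm, ← ofReal_norm]
      exact ENNReal.ofReal_le_ofReal (le_of_lt (by simpa [Real.norm_eq_abs] using hy.2))
    intro hle
    exact absurd (lt_of_le_of_lt (hδy.trans hle) hcon) (lt_irrefl _)
  have hz : (volume.restrict (ntRegion Ω κ w)) W = 0 := measure_mono_null hsub hae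
  rw [Measure.restrict_apply' hV.measurableSet,
    inter_eq_left.2 inter_subset_left] at hz
  exact absurd hz hpos.ne'

/-- decay at infinity within boundary slabs, for continuous functions whose
nontangential maximal function lies in `L^q`, on an open set with unbounded lower Ahlfors
regular boundary. -/
theorem statement6 (n : ℕ) (hn : 2 ≤ n) (Ω : Set (Euc n)) (hΩ : IsOpen Ω)
    (hne : Ω.Nonempty) (hprop : Ω ≠ univ)
    (hubd : ¬ Bornology.IsBounded (frontier Ω))
    (c : ℝ) (hc : 0 < c)
    (hlAR : ∀ x ∈ frontier Ω, ∀ r : ℝ, 0 < r →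
      ENNReal.ofReal (c * r ^ (n - 1)) ≤ μH[(n : ℝ) - 1] (frontier Ω ∩ ball x r))
    (κ : ℝ) (hκ : 0 < κ) (q : ℝ) (hq : 1 ≤ q)
    (u : Euc n → ℝ) (hu : ContinuousOn u Ω)
    (hN : ∫⁻ x, (ntMax Ω κ u x) ^ q ∂((μH[(n : ℝ) - 1]).restrict (frontier Ω)) < ⊤)
    (a b : ℝ) (ha : 0 < a) (hab : a ≤ b) (δ : ℝ) (hδ : 0 < δ) :
    ∃ R : ℝ, 0 < R ∧ ∀ x ∈ Ω, R ≤ ‖x‖ →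
      a ≤ infDist x (frontier Ω) → infDist x (frontier Ω) ≤ b → |u x| ≤ δ := by
  by_contra hcontra
  push_neg at hcontra
  have hFclosed : IsClosed (frontier Ω) := isClosed_frontier
  -- frontier is nonempty
  have hFne : (frontier Ω).Nonempty := by
    by_contra hFe
    rw [not_nonempty_iff_eq_empty] at hFe
    obtain ⟨x₀, hx₀Ω, _, hx₀a, _, _⟩ := hcontra 1 one_pos
    rw [hFe, infDist_empty] at hx₀a
    exact absurd hx₀a (not_le.2 ha)
  set r : ℝ := κ * a / 2 with hrdef
  have hr : 0 < r := by positivity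
  set C : ℝ := 2 * b + 2 * r + 1 with hC
  have hb : 0 < b := lt_of_lt_of_le ha hab
  have hCpos : 0 < C := by positivity
  -- choice of bad points
  have hch : ∀ R : ℝ, ∃ x : Euc n, x ∈ Ω ∧ max R 1 ≤ ‖x‖ ∧
      a ≤ infDist x (frontier Ω) ∧ infDist x (frontier Ω) ≤ b ∧ δ < |u x| := by
    intro R
    obtain ⟨x, hxΩ, h1, h2, h3, h4⟩ :=
      hcontra (max R 1) (lt_of_lt_of_le one_pos (le_max_right _ _))
    exact ⟨x, hxΩ, h1, h2, h3, h4⟩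
  choose Fp hFpΩ hFpnorm hFpa hFpb hFpu using hch
  let g : ℕ → Euc n := fun k => Nat.rec (Fp 0) (fun _ xk => Fp (‖xk‖ + C)) k
  have hgsucc : ∀ k, g (k+1) = Fp (‖g k‖ + C) := fun _ => rfl
  have hgP : ∀ k, g k ∈ Ω ∧ a ≤ infDist (g k) (frontier Ω) ∧
      infDist (g k) (frontier Ω) ≤ b ∧ δ < |u (g k)| := by
    intro k
    cases k with
    | zero => exact ⟨hFpΩ 0, hFpa 0, hFpb 0, hFpu 0⟩
    | succ m => rw [hgsucc m]; exact ⟨hFpΩ _, hFpa _, hFpb _, hFpu _⟩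
  have hgstep : ∀ k, ‖g k‖ + C ≤ ‖g (k+1)‖ := by
    intro k
    rw [hgsucc k]
    exact le_trans (le_max_left _ _) (hFpnorm (‖g k‖ + C))
  have hgmono : ∀ i j, i < j → ‖g i‖ + C ≤ ‖g j‖ := by
    intro i j hij
    induction j with
    | zero => omega
    | succ m ih =>
      rcases Nat.lt_succ_iff_lt_or_eq.mp hij with h | h
      · have h1 := ih h
        have h2 := hgstep m
        linarith
      · subst h; exact hgstep i
  -- closest boundary points
  have hzex : ∀ k, ∃ z ∈ frontier Ω, infDist (g k) (frontier Ω) = dist (g k) z :=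
    fun k => hFclosed.exists_infDist_eq_dist hFne (g k)
  choose z hzF hzd using hzex
  -- key pointwise lower bound for the maximal function
  have key : ∀ k, ∀ w ∈ frontier Ω, dist w (z k) < r →
      ENNReal.ofReal δ ≤ ntMax Ω κ u w := by
    intro k w hwF hwz
    obtain ⟨hkΩ, hka, hkb, hku⟩ := hgP k
    have hda : a ≤ infDist (g k) (frontier Ω) := hka
    have hd0 : 0 < infDist (g k) (frontier Ω) := lt_of_lt_of_le ha hda
    have hmem : g k ∈ ntRegion Ω κ w := by
      refine ⟨hkΩ, ?_⟩
      have h1 : dist w (g k) ≤ dist w (z k) + dist (z k) (g k) := dist_triangle _ _ _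
      have h2 : dist (z k) (g k) = infDist (g k) (frontier Ω) := by
        rw [hzd k, dist_comm]
      have hκa : κ * a ≤ κ * infDist (g k) (frontier Ω) :=
        mul_le_mul_of_nonneg_left hda (le_of_lt hκ)
      have hκd : 0 < κ * infDist (g k) (frontier Ω) := mul_pos hκ hd0
      have hexp : (1 + κ) * infDist (g k) (frontier Ω) =
          infDist (g k) (frontier Ω) + κ * infDist (g k) (frontier Ω) := by ring
      rw [hexp]
      rw [h2] at h1
      rw [hrdef] at hwz
      linarith
    exact ofReal_le_ntMax hΩ hu hmem hku
  -- the measure and quantities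
  set σ := (μH[(n : ℝ) - 1]).restrict (frontier Ω) with hσ
  set m : ℝ≥0∞ := (ENNReal.ofReal δ) ^ q * ENNReal.ofReal (c * r ^ (n - 1)) with hm
  have hq0 : (0:ℝ) ≤ q := le_trans zero_le_one hq
  have hm0 : m ≠ 0 := by
    apply mul_ne_zero
    · exact (ENNReal.rpow_pos (ENNReal.ofReal_pos.2 hδ) ENNReal.ofReal_ne_top).ne'
    · exact (ENNReal.ofReal_pos.2 (by positivity)).ne'
  have hmtop : m ≠ ⊤ :=
    ENNReal.mul_ne_top (ENNReal.rpow_ne_top_of_nonneg hq0 ENNReal.ofReal_ne_top)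
      ENNReal.ofReal_ne_top
  set T := ∫⁻ x, (ntMax Ω κ u x) ^ q ∂σ with hT
  have hTlt : T < ⊤ := hN
  obtain ⟨K, hK⟩ := ENNReal.exists_nat_gt
    (show T / m ≠ ⊤ from (ENNReal.div_lt_top hTlt.ne hm0).ne)
  have hTK : T < (K : ℝ≥0∞) * m := by
    rwa [ENNReal.div_lt_iff (Or.inl hm0) (Or.inl hmtop)] at hK
  -- disjointness of the boundary balls
  have hzdist : ∀ i j, i < j → 2 * r + 1 ≤ dist (z i) (z j) := by
    intro i j hij
    have h1 : ‖g i‖ + C ≤ ‖g j‖ := hgmono i j hij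
    have h2 : dist (g i) (z i) ≤ b := by rw [← hzd i]; exact (hgP i).2.2.1
    have h3 : dist (g j) (z j) ≤ b := by rw [← hzd j]; exact (hgP j).2.2.1
    have h4 : ‖g j‖ - ‖g i‖ ≤ dist (g i) (g j) := by
      have h5 := norm_sub_norm_le (g j) (g i)
      rw [dist_comm, dist_eq_norm]
      linarith
    have h5 : dist (g i) (g j) ≤ dist (g i) (z i) + dist (z i) (z j) + dist (z j) (g j) :=
      dist_triangle4 _ _ _ _
    rw [dist_comm (z j) (g j)] at h5
    linarith
  have hdisj : (↑(Finset.range K) : Set ℕ).PairwiseDisjoint (fun i => ball (z i) r) := by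
    intro i _ j _ hij
    rcases hij.lt_or_gt with h | h
    · exact ball_disjoint_ball (by linarith [hzdist i j h])
    · exact (ball_disjoint_ball (by linarith [hzdist j i h])).symm
  -- lower bound for each ball integral
  have hball : ∀ i, m ≤ ∫⁻ w in ball (z i) r, (ntMax Ω κ u w) ^ q ∂σ := by
    intro i
    have hmeasb : MeasurableSet (ball (z i) r) := measurableSet_ball
    have hσball : ENNReal.ofReal (c * r ^ (n - 1)) ≤ σ (ball (z i) r) := by
      rw [hσ, Measure.restrict_apply hmeasb, inter_comm]
      exact hlAR (z i) (hzF i) r hr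
    have hae : ∀ᵐ w ∂(σ.restrict (ball (z i) r)),
        (ENNReal.ofReal δ) ^ q ≤ (ntMax Ω κ u w) ^ q := by
      rw [hσ, Measure.restrict_restrict hmeasb]
      refine (ae_restrict_mem (hmeasb.inter hFclosed.measurableSet)).mono ?_
      intro w hw
      exact ENNReal.rpow_le_rpow (key i w hw.2 (mem_ball.mp hw.1)) hq0
    calc m ≤ (ENNReal.ofReal δ) ^ q * σ (ball (z i) r) := by
          rw [hm]; exact mul_le_mul_right hσball _
      _ = ∫⁻ _ in ball (z i) r, (ENNReal.ofReal δ) ^ q ∂σ := by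
          rw [setLIntegral_const, mul_comm]
      _ ≤ ∫⁻ w in ball (z i) r, (ntMax Ω κ u w) ^ q ∂σ := lintegral_mono_ae hae
  -- sum over disjoint balls
  have hsum : (K : ℝ≥0∞) * m ≤ T := by
    calc (K : ℝ≥0∞) * m = ∑ _i ∈ Finset.range K, m := by
          rw [Finset.sum_const, Finset.card_range, nsmul_eq_mul]
      _ ≤ ∑ i ∈ Finset.range K, ∫⁻ w in ball (z i) r, (ntMax Ω κ u w) ^ q ∂σ :=
          Finset.sum_le_sum fun i _ => hball i
      _ = ∫⁻ w in ⋃ i ∈ Finset.range K, ball (z i) r, (ntMax Ω κ u w) ^ q ∂σ :=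
          (lintegral_biUnion_finset hdisj (fun i _ => measurableSet_ball) _).symm
      _ ≤ T := by rw [hT]; exact setLIntegral_le_lintegral _ _
  exact absurd hsum (not_le.2 hTK)
end

section
/- Let n ≥ 2, let U ⊆ ℝⁿ ∖ {0} be an open set, and let h : U → ℝ be a C² function with Δh = 0 on U. Let U* := { x/|x|² : x ∈ U } be the image of U under the inversion x ↦ x/|x|² (so U* ⊆ ℝⁿ ∖ {0} is open). Then the Kelvin transform v : U* → ℝ defined by v(x) := |x|^{2−n} · h(x/|x|²) is C² and satisfies Δv = 0 on U*; i.e., the Kelvin transform preserves harmonicity. -/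
open MeasureTheory Metric Set Filter
open scoped ENNReal NNReal Topology

open scoped RealInnerProductSpace

noncomputable section

variable {n : ℕ}

namespace Kelvin
def ee (n : ℕ) (i : Fin n) : Euc n := EuclideanSpace.single i 1

def kq (z : Euc n) : ℝ := ‖z‖ ^ 2

def kι (z : Euc n) : Euc n := (kq z)⁻¹ • z

lemma kq_pos {z : Euc n} (hz : z ≠ 0) : 0 < kq z :=
  pow_pos (norm_pos_iff.2 hz) 2

lemma hasFDerivAt_kq (z : Euc n) : HasFDerivAt kq ((2:ℝ) • innerSL ℝ z) z := by
  have := (hasStrictFDerivAt_norm_sq z).hasFDerivAt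
  convert this using 1
  ext u
  simp [two_smul]
  · rfl
  · ext u; simp [two_smul]

lemma hasFDerivAt_kc (i : Fin n) (z : Euc n) :
    HasFDerivAt (fun y : Euc n => (⟪y, ee n i⟫ : ℝ)) (innerSL ℝ (ee n i)) z := by
  have h1 : (fun y : Euc n => (⟪y, ee n i⟫ : ℝ)) = fun y => innerSL ℝ (ee n i) y := by
    ext y; simp only [innerSL_apply_apply]; exact real_inner_comm _ _
  rw [h1]
  exact (innerSL ℝ (ee n i)).hasFDerivAt

lemma kq_kι {z : Euc n} (hz : z ≠ 0) : kq (kι z) = (kq z)⁻¹ := by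
  have h0 : ‖z‖ ≠ 0 := norm_ne_zero_iff.2 hz
  rw [kι, kq, norm_smul, Real.norm_eq_abs, abs_of_nonneg (inv_nonneg.2 (kq_pos hz).le)]
  rw [kq]
  field_simp

lemma kι_ne_zero {z : Euc n} (hz : z ≠ 0) : kι z ≠ 0 :=
  smul_ne_zero (inv_ne_zero (kq_pos hz).ne') hz

lemma kι_kι {z : Euc n} (hz : z ≠ 0) : kι (kι z) = z := by
  rw [kι, kq_kι hz, inv_inv, kι, smul_smul, mul_inv_cancel₀ (kq_pos hz).ne', one_smul]

def Dι (z : Euc n) : Euc n →L[ℝ] Euc n :=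
  (kq z)⁻¹ • ContinuousLinearMap.id ℝ (Euc n) +
    ((-(kq z ^ 2)⁻¹) • ((2:ℝ) • innerSL ℝ z)).smulRight z

lemma hasFDerivAt_kqinv {z : Euc n} (hz : z ≠ 0) :
    HasFDerivAt (fun y : Euc n => (kq y)⁻¹) ((-(kq z ^ 2)⁻¹) • ((2:ℝ) • innerSL ℝ z)) z :=
  (hasDerivAt_inv (kq_pos hz).ne').comp_hasFDerivAt z (hasFDerivAt_kq z)

lemma hasFDerivAt_kι {z : Euc n} (hz : z ≠ 0) : HasFDerivAt kι (Dι z) z :=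
  (hasFDerivAt_kqinv hz).smul (hasFDerivAt_id z)

def kw (i : Fin n) (z : Euc n) : Euc n :=
  (kq z)⁻¹ • ee n i + (-((kq z)⁻¹ * (kq z)⁻¹ * (2 * ⟪z, ee n i⟫))) • z

lemma Dι_apply (i : Fin n) (z : Euc n) : Dι z (ee n i) = kw i z := by
  simp only [Dι, kw, ContinuousLinearMap.add_apply, ContinuousLinearMap.smul_apply,
    ContinuousLinearMap.id_apply, ContinuousLinearMap.smulRight_apply, innerSL_apply_apply,
    smul_smul, sq, mul_inv, smul_eq_mul]
  module

def kv (h : Euc n → ℝ) (a : ℝ) (z : Euc n) : ℝ := kq z ^ a * h (kι z)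

def Dv (h : Euc n → ℝ) (a : ℝ) (z : Euc n) : Euc n →L[ℝ] ℝ :=
  kq z ^ a • ((fderiv ℝ h (kι z)).comp (Dι z)) +
    h (kι z) • ((a * kq z ^ (a-1)) • ((2:ℝ) • innerSL ℝ z))

lemma hasFDerivAt_kv {h : Euc n → ℝ} {a : ℝ} {z : Euc n} (hz : z ≠ 0)
    (hd : DifferentiableAt ℝ h (kι z)) :
    HasFDerivAt (kv h a) (Dv h a z) z := by
  have hqa : HasFDerivAt (fun y : Euc n => kq y ^ a)
      ((a * kq z ^ (a-1)) • ((2:ℝ) • innerSL ℝ z)) z :=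
    (hasFDerivAt_kq z).rpow_const (Or.inl (kq_pos hz).ne')
  have hH : HasFDerivAt (fun y : Euc n => h (kι y)) ((fderiv ℝ h (kι z)).comp (Dι z)) z :=
    hd.hasFDerivAt.comp z (hasFDerivAt_kι hz)
  exact hqa.mul hH

def kg (h : Euc n → ℝ) (a : ℝ) (i : Fin n) (z : Euc n) : ℝ :=
  kq z ^ a * fderiv ℝ h (kι z) (kw i z) +
    h (kι z) * (a * kq z ^ (a-1) * (2 * ⟪z, ee n i⟫))

lemma Dv_apply (h : Euc n → ℝ) (a : ℝ) (i : Fin n) (z : Euc n) :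
    Dv h a z (ee n i) = kg h a i z := by
  simp only [Dv, kg, ContinuousLinearMap.add_apply, ContinuousLinearMap.smul_apply,
    ContinuousLinearMap.comp_apply, Dι_apply, innerSL_apply_apply, smul_eq_mul]

lemma sum_coord_smul (x : Euc n) : ∑ i, x i • ee n i = x := by
  have h := (EuclideanSpace.basisFun (Fin n) ℝ).sum_repr' x
  simp only [EuclideanSpace.basisFun_apply, EuclideanSpace.inner_single_left, map_one, one_mul,
    starRingEnd_apply, star_trivial] at h
  simpa [ee] using h

lemma sum_apply_coord (L : Euc n →L[ℝ] ℝ) (x : Euc n) : ∑ i, x i * L (ee n i) = L x := by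
  have : ∀ i : Fin n, x i * L (ee n i) = L (x i • ee n i) := by
    intro i; rw [L.map_smul, smul_eq_mul]
  simp_rw [this, ← map_sum, sum_coord_smul]

lemma sum_sq_coord (x : Euc n) : ∑ i, x i * x i = kq x := by
  rw [kq, ← real_inner_self_eq_norm_sq]
  rw [PiLp.inner_apply]
  simp [RCLike.inner_apply, mul_comm]
  simp only [sq]

lemma laplacian_eq_sum {g : Euc n → ℝ} {y : Euc n} (hd : DifferentiableAt ℝ (fderiv ℝ g) y) :
    laplacian g y = ∑ i, fderiv ℝ (fderiv ℝ g) y (ee n i) (ee n i) := by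
  unfold laplacian
  refine Finset.sum_congr rfl fun i _ => ?_
  have h1 := hd.hasFDerivAt.clm_apply (hasFDerivAt_const (EuclideanSpace.single i (1:ℝ)) y)
  rw [h1.fderiv]
  simp [ee]

lemma fderiv_kg {h : Euc n → ℝ} {a : ℝ} {x : Euc n} (hx : x ≠ 0)
    (hd1 : DifferentiableAt ℝ h (kι x)) (hd2 : DifferentiableAt ℝ (fderiv ℝ h) (kι x))
    (i : Fin n) :
    fderiv ℝ (kg h a i) x (ee n i) =
      ((4*a^2-4*a) * h (kι x) * kq x ^ (a-1-1)
        + 8 * kq x ^ a * (kq x)⁻¹^3 * fderiv ℝ h (kι x) x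
        - 8 * a * (kq x)⁻¹^2 * kq x ^ (a-1) * fderiv ℝ h (kι x) x
        + 4 * kq x ^ a * (kq x)⁻¹^4 * fderiv ℝ (fderiv ℝ h) (kι x) x x) * (x i * x i)
      + (2 * a * kq x ^ (a-1) * h (kι x) - 2 * kq x ^ a * (kq x)⁻¹^2 * fderiv ℝ h (kι x) x)
      + (4 * a * (kq x)⁻¹ * kq x ^ (a-1) - 4 * kq x ^ a * (kq x)⁻¹^2) *
          (x i * fderiv ℝ h (kι x) (ee n i))
      + kq x ^ a * (kq x)⁻¹^2 * (fderiv ℝ (fderiv ℝ h) (kι x) (ee n i) (ee n i))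
      - 2 * kq x ^ a * (kq x)⁻¹^3 * (x i * fderiv ℝ (fderiv ℝ h) (kι x) (ee n i) x)
      - 2 * kq x ^ a * (kq x)⁻¹^3 * (x i * fderiv ℝ (fderiv ℝ h) (kι x) x (ee n i)) := by
  have hq := hasFDerivAt_kq x
  have hqinv := hasFDerivAt_kqinv hx
  have hι := hasFDerivAt_kι hx
  have hcc := hasFDerivAt_kc i x
  have hqa : HasFDerivAt (fun y : Euc n => kq y ^ a)
      ((a * kq x ^ (a-1)) • ((2:ℝ) • innerSL ℝ x)) x :=
    hq.rpow_const (Or.inl (kq_pos hx).ne')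
  have hqa1 : HasFDerivAt (fun y : Euc n => kq y ^ (a-1))
      (((a-1) * kq x ^ (a-1-1)) • ((2:ℝ) • innerSL ℝ x)) x :=
    hq.rpow_const (Or.inl (kq_pos hx).ne')
  have hH : HasFDerivAt (fun z : Euc n => h (kι z)) ((fderiv ℝ h (kι x)).comp (Dι x)) x :=
    hd1.hasFDerivAt.comp x hι
  have hDh : HasFDerivAt (fun z : Euc n => fderiv ℝ h (kι z))
      ((fderiv ℝ (fderiv ℝ h) (kι x)).comp (Dι x)) x :=
    hd2.hasFDerivAt.comp x hι
  have hs := (((hqinv.mul hqinv).mul (hcc.const_mul (2:ℝ))).neg)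
  have hw := (hqinv.smul_const (ee n i)).add (hs.smul (hasFDerivAt_id x))
  have hB := hDh.clm_apply hw
  have h2 := (hqa.mul hB).add (hH.mul ((hqa1.const_mul a).mul (hcc.const_mul (2:ℝ))))
  have h3 : HasFDerivAt (kg h a i) _ x := h2
  rw [h3.fderiv]
  simp only [ContinuousLinearMap.add_apply, ContinuousLinearMap.smul_apply,
    ContinuousLinearMap.comp_apply, ContinuousLinearMap.smulRight_apply,
    ContinuousLinearMap.flip_apply, ContinuousLinearMap.id_apply,
    ContinuousLinearMap.neg_apply, ContinuousLinearMap.coe_smul', Pi.smul_apply,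
    innerSL_apply_apply, Dι_apply, smul_eq_mul, map_add, _root_.map_smul, map_neg,
    ContinuousLinearMap.map_smul, kw, ContinuousLinearMap.zero_apply,
    ContinuousLinearMap.coe_comp', Function.comp_apply, id_eq, Pi.add_apply, Pi.neg_apply,
    Pi.mul_apply, Pi.pow_apply, Pi.smul_apply', id]
  simp only [ee, EuclideanSpace.inner_single_left, EuclideanSpace.inner_single_right,
    starRingEnd_apply, star_trivial, one_mul, mul_one, EuclideanSpace.single_apply,
    eq_self_iff_true, if_true, id_eq]
  ring

lemma laplacian_kv {U : Set (Euc n)} (hUo : IsOpen U) {h : Euc n → ℝ}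
    (hh : ContDiffOn ℝ 2 h U) (hharm : ∀ y ∈ U, laplacian h y = 0)
    {a : ℝ} (ha : a = ((2:ℝ) - n)/2) {x : Euc n} (hx : x ≠ 0) (hxU : kι x ∈ U) :
    laplacian (kv h a) x = 0 := by
  have hQ := kq_pos hx
  have hd1 : ∀ z : Euc n, kι z ∈ U → DifferentiableAt ℝ h (kι z) := fun z hz =>
    (hh.differentiableOn (by norm_num)).differentiableAt (hUo.mem_nhds hz)
  have hf' : ContDiffOn ℝ 1 (fderiv ℝ h) U := hh.fderiv_of_isOpen hUo (by norm_num)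
  have hd2 : DifferentiableAt ℝ (fderiv ℝ h) (kι x) :=
    (hf'.differentiableOn (by norm_num)).differentiableAt (hUo.mem_nhds hxU)
  have hVo : IsOpen {z : Euc n | z ≠ 0 ∧ kι z ∈ U} := by
    have hce : ContinuousOn (kι : Euc n → Euc n) {z : Euc n | z ≠ 0} := by
      refine ContinuousOn.smul (f := fun z : Euc n => (kq z)⁻¹) ?_ continuousOn_id
      exact ((continuous_norm.pow 2).continuousOn).inv₀ fun z hz => (kq_pos hz).ne'
    have h2 : {z : Euc n | z ≠ 0 ∧ kι z ∈ U} = {(0 : Euc n)}ᶜ ∩ kι ⁻¹' U := by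
      ext z
      simp [Set.mem_inter_iff]
    rw [h2]
    exact hce.isOpen_inter_preimage isOpen_compl_singleton hUo
  have hxV : x ∈ {z : Euc n | z ≠ 0 ∧ kι z ∈ U} := ⟨hx, hxU⟩
  have hev : ∀ i, (fun z : Euc n => fderiv ℝ (kv h a) z (ee n i)) =ᶠ[𝓝 x] kg h a i := by
    intro i
    filter_upwards [hVo.mem_nhds hxV] with z hz
    rw [(hasFDerivAt_kv hz.1 (hd1 z hz.2)).fderiv, Dv_apply]
  have hE : ∀ i, fderiv ℝ (fun z : Euc n => fderiv ℝ (kv h a) z (ee n i)) x (ee n i) =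
      ((4*a^2-4*a) * h (kι x) * kq x ^ (a-1-1)
        + 8 * kq x ^ a * (kq x)⁻¹^3 * fderiv ℝ h (kι x) x
        - 8 * a * (kq x)⁻¹^2 * kq x ^ (a-1) * fderiv ℝ h (kι x) x
        + 4 * kq x ^ a * (kq x)⁻¹^4 * fderiv ℝ (fderiv ℝ h) (kι x) x x) * (x i * x i)
      + (2 * a * kq x ^ (a-1) * h (kι x) - 2 * kq x ^ a * (kq x)⁻¹^2 * fderiv ℝ h (kι x) x)
      + (4 * a * (kq x)⁻¹ * kq x ^ (a-1) - 4 * kq x ^ a * (kq x)⁻¹^2) *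
          (x i * fderiv ℝ h (kι x) (ee n i))
      + kq x ^ a * (kq x)⁻¹^2 * (fderiv ℝ (fderiv ℝ h) (kι x) (ee n i) (ee n i))
      - 2 * kq x ^ a * (kq x)⁻¹^3 * (x i * fderiv ℝ (fderiv ℝ h) (kι x) (ee n i) x)
      - 2 * kq x ^ a * (kq x)⁻¹^3 * (x i * fderiv ℝ (fderiv ℝ h) (kι x) x (ee n i)) := by
    intro i
    rw [(hev i).fderiv_eq]
    exact fderiv_kg hx (hd1 x hxU) hd2 i
  have hS1 := sum_sq_coord x
  have hS2 := sum_apply_coord (fderiv ℝ h (kι x)) x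
  have hS3 : ∑ i, fderiv ℝ (fderiv ℝ h) (kι x) (ee n i) (ee n i) = 0 := by
    rw [← laplacian_eq_sum hd2]; exact hharm _ hxU
  have hS4 : ∑ i, x i * fderiv ℝ (fderiv ℝ h) (kι x) (ee n i) x
      = fderiv ℝ (fderiv ℝ h) (kι x) x x := by
    have := sum_apply_coord ((fderiv ℝ (fderiv ℝ h) (kι x)).flip x) x
    simpa using this
  have hS5 : ∑ i, x i * fderiv ℝ (fderiv ℝ h) (kι x) x (ee n i)
      = fderiv ℝ (fderiv ℝ h) (kι x) x x := sum_apply_coord (fderiv ℝ (fderiv ℝ h) (kι x) x) x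
  have hstep : laplacian (kv h a) x = ∑ i, fderiv ℝ
      (fun z : Euc n => fderiv ℝ (kv h a) z (ee n i)) x (ee n i) := by
    unfold laplacian
    exact Finset.sum_congr rfl fun i _ => rfl
  rw [hstep]
  simp only [hE]
  rw [Finset.sum_sub_distrib, Finset.sum_sub_distrib, Finset.sum_add_distrib,
    Finset.sum_add_distrib, Finset.sum_add_distrib]
  simp only [← Finset.mul_sum, Finset.sum_const, Finset.card_univ, Fintype.card_fin,
    nsmul_eq_mul]
  rw [hS1, hS2, hS3, hS4, hS5]
  have e1 : kq x ^ (a-1) = kq x ^ a / kq x := by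
    rw [Real.rpow_sub hQ, Real.rpow_one]
  have e2 : kq x ^ (a-1-1) = kq x ^ a / (kq x * kq x) := by
    rw [Real.rpow_sub hQ, Real.rpow_sub hQ, Real.rpow_one]; ring
  rw [e1, e2]
  subst ha
  field_simp
  ring

lemma contDiffAt_kv {U : Set (Euc n)} (hUo : IsOpen U) {h : Euc n → ℝ}
    (hh : ContDiffOn ℝ 2 h U) {a : ℝ} {x : Euc n} (hx : x ≠ 0) (hxU : kι x ∈ U) :
    ContDiffAt ℝ 2 (kv h a) x := by
  have hq : ContDiffAt ℝ 2 (kq : Euc n → ℝ) x := (contDiff_norm_sq ℝ).contDiffAt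
  have hqa : ContDiffAt ℝ 2 (fun y : Euc n => kq y ^ a) x :=
    (Real.contDiffAt_rpow_const_of_ne (kq_pos hx).ne').comp x hq
  have hι : ContDiffAt ℝ 2 (kι : Euc n → Euc n) x :=
    ContDiffAt.smul (hq.inv (kq_pos hx).ne') contDiffAt_id
  have hH : ContDiffAt ℝ 2 (fun y : Euc n => h (kι y)) x :=
    (hh.contDiffAt (hUo.mem_nhds hxU)).comp x hι
  exact hqa.mul hH

end Kelvin

end

/-- the Kelvin transform preserves harmonicity: if `h` is harmonic on an
open set `U ⊆ ℝⁿ ∖ {0}`, then `v(x) = |x|^{2-n} h(x/|x|²)` is harmonic on the image of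
`U` under the inversion `x ↦ x/|x|²`. -/
theorem statement7 (n : ℕ) (hn : 2 ≤ n) (U : Set (Euc n)) (hUo : IsOpen U)
    (hU0 : (0 : Euc n) ∉ U)
    (h : Euc n → ℝ) (hh : ContDiffOn ℝ 2 h U) (hharm : ∀ x ∈ U, laplacian h x = 0) :
    ContDiffOn ℝ 2 (fun y : Euc n => ‖y‖ ^ ((2 : ℝ) - n) * h ((‖y‖ ^ 2)⁻¹ • y))
      ((fun x : Euc n => (‖x‖ ^ 2)⁻¹ • x) '' U) ∧
    ∀ x ∈ (fun x : Euc n => (‖x‖ ^ 2)⁻¹ • x) '' U,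
      laplacian (fun y : Euc n => ‖y‖ ^ ((2 : ℝ) - n) * h ((‖y‖ ^ 2)⁻¹ • y)) x = 0 := by
  have himg : (fun x : Euc n => (‖x‖ ^ 2)⁻¹ • x) '' U
      = {z : Euc n | z ≠ 0 ∧ Kelvin.kι z ∈ U} := by
    ext z
    constructor
    · rintro ⟨y, hyU, rfl⟩
      have hy0 : y ≠ 0 := fun hy => hU0 (hy ▸ hyU)
      refine ⟨Kelvin.kι_ne_zero hy0, ?_⟩
      rw [show (fun x : Euc n => (‖x‖ ^ 2)⁻¹ • x) y = Kelvin.kι y from rfl, Kelvin.kι_kι hy0]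
      exact hyU
    · rintro ⟨hz0, hzU⟩
      exact ⟨Kelvin.kι z, hzU, Kelvin.kι_kι hz0⟩
  have hfun : (fun y : Euc n => ‖y‖ ^ ((2 : ℝ) - n) * h ((‖y‖ ^ 2)⁻¹ • y))
      = Kelvin.kv h (((2:ℝ) - n)/2) := by
    funext y
    show ‖y‖ ^ ((2:ℝ) - n) * h ((‖y‖ ^ 2)⁻¹ • y)
        = (‖y‖ ^ 2 : ℝ) ^ (((2:ℝ) - n)/2) * h (Kelvin.kι y)
    congr 1
    have h2a : ((2:ℝ) - n) = (2:ℝ) * (((2:ℝ) - n)/2) := by ring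
    conv_lhs => rw [h2a, Real.rpow_mul (norm_nonneg y)]
    congr 1
    rw [← Real.rpow_natCast ‖y‖ 2]
    norm_num
  rw [hfun, himg]
  constructor
  · intro x hx
    exact (Kelvin.contDiffAt_kv hUo hh hx.1 hx.2).contDiffWithinAt
  · intro x hx
    exact Kelvin.laplacian_kv hUo hh hharm rfl hx.1 hx.2
end

section
/- Let n ∈ ℕ and let Ω be an open, nonempty, proper subset of ℝⁿ whose boundary ∂Ω is an Ahlfors regular set. Then ℋ^{n−1}(∂*Ω ∖ ∂_nta Ω) = 0, where ∂*Ω is the measure-theoretic boundary of Ω and ∂_nta Ω := { x ∈ ∂Ω : x belongs to the closure of Γ_κ(x) for every κ > 0 } is the nontangentially accessible boundary. -/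
open MeasureTheory Metric Set Filter
open scoped ENNReal NNReal Topology

noncomputable section AuxStatement11

variable {n : ℕ}

/-- From positive upper volume density of `S` at `x`, there are points of `S`
arbitrarily close to `x`. -/
lemma aux_close_points {S : Set (Euc n)} {x : Euc n}
    (h : 0 < limsup (fun r : ℝ => volume (S ∩ ball x r) / ENNReal.ofReal (r ^ n)) (𝓝[>] 0)) :
    ∀ ε > (0:ℝ), ∃ y ∈ S, dist x y < ε := by
  intro ε hε
  have hfreq : ∃ᶠ r in 𝓝[>] (0:ℝ),
      0 < volume (S ∩ ball x r) / ENNReal.ofReal (r ^ n) :=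
    frequently_lt_of_lt_limsup (h := h)
  have hev : ∀ᶠ r : ℝ in 𝓝[>] 0, r < ε :=
    (eventually_lt_nhds hε).filter_mono nhdsWithin_le_nhds
  obtain ⟨r, hpos, hrε⟩ := (hfreq.and_eventually hev).exists
  have hne : (S ∩ ball x r).Nonempty := by
    apply nonempty_of_measure_ne_zero (μ := volume)
    intro h0
    rw [h0, ENNReal.zero_div] at hpos
    exact lt_irrefl _ hpos
  obtain ⟨y, hyS, hyb⟩ := hne
  exact ⟨y, hyS, lt_trans (by rwa [mem_ball, dist_comm] at hyb) hrε⟩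

lemma mtBoundary_subset_frontier {Ω : Set (Euc n)} (hΩ : IsOpen Ω) :
    mtBoundary n Ω ⊆ frontier Ω := by
  rintro x ⟨h1, h2⟩
  rw [frontier_eq_closure_inter_closure]
  constructor
  · rw [Metric.mem_closure_iff]
    intro ε hε
    obtain ⟨y, hy, hd⟩ := aux_close_points h1 ε hε
    exact ⟨y, hy, hd⟩
  · rw [Metric.mem_closure_iff]
    intro ε hε
    obtain ⟨y, hy, hd⟩ := aux_close_points h2 ε hε
    exact ⟨y, hy, hd⟩

/-- The open ball of radius `infDist y (frontier Ω)` around `y ∈ Ω` is inside `Ω`. -/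
lemma ball_infDist_frontier_subset {Ω : Set (Euc n)} (hΩ : IsOpen Ω) {y : Euc n} (hy : y ∈ Ω) :
    ball y (infDist y (frontier Ω)) ⊆ Ω := by
  set d := infDist y (frontier Ω) with hd
  rcases le_or_gt d 0 with h | h
  · rw [ball_eq_empty.mpr h]; exact empty_subset _
  · have hdisj : Disjoint (frontier Ω) (ball y d) := by
      rw [Set.disjoint_right]
      intro w hw hwF
      exact absurd (Metric.infDist_le_dist_of_mem hwF) (by rw [dist_comm]; exact not_le.mpr hw)
    have hclopen := isClopen_preimage_val hΩ hdisj
    have hconn : IsPreconnected (ball y d) := (convex_ball y d).isPreconnected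
    haveI := Subtype.preconnectedSpace hconn
    have huniv : (Subtype.val ⁻¹' Ω : Set (ball y d)) = univ :=
      hclopen.eq_univ ⟨⟨y, mem_ball_self h⟩, hy⟩
    intro w hw
    have : (⟨w, hw⟩ : ball y d) ∈ (Subtype.val ⁻¹' Ω : Set (ball y d)) := by
      rw [huniv]; exact mem_univ _
    exact this

/-- Quantitative accessibility: a boundary point `z` which is `(1+q/2)`-close to a Whitney
point `y` admits a nontangential point `w` at distance `< ρ`. -/
lemma aux_access {Ω : Set (Euc n)} (hΩ : IsOpen Ω) {q ρ : ℝ} (hq0 : 0 < q) (hq1 : q ≤ 1)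
    {z y : Euc n} (hzF : z ∈ frontier Ω) (hy : y ∈ Ω)
    (hd0 : 0 < infDist y (frontier Ω)) (hdρ : 2 * infDist y (frontier Ω) ≤ ρ)
    (hzy : dist z y < (1 + q/2) * infDist y (frontier Ω)) :
    ∃ w ∈ ntRegion Ω q z, dist z w < ρ := by
  set d := infDist y (frontier Ω) with hdd
  set s := dist z y with hs
  have hds : d ≤ s := by rw [hs, dist_comm]; exact Metric.infDist_le_dist_of_mem hzF
  have hs0 : 0 < s := lt_of_lt_of_le hd0 hds
  set t := d / (4*s) with ht
  have ht0 : 0 < t := by positivity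
  have hts : t * s = d / 4 := by rw [ht]; field_simp
  have ht1 : t ≤ 1 := by
    rw [ht, div_le_one (by positivity)]
    nlinarith
  set w := y + t • (z - y) with hw
  have hzy_norm : ‖z - y‖ = s := by rw [hs, dist_eq_norm]
  have hyw : dist y w = d / 4 := by
    have h1 : y - w = -(t • (z - y)) := by rw [hw]; abel
    rw [dist_eq_norm, h1, norm_neg, norm_smul, Real.norm_eq_abs, abs_of_pos ht0, hzy_norm, hts]
  have hzw : dist z w = s - d / 4 := by
    have h1 : z - w = (1 - t) • (z - y) := by
      rw [hw, sub_smul, one_smul]; abel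
    rw [dist_eq_norm, h1, norm_smul, Real.norm_eq_abs, abs_of_nonneg (by linarith), hzy_norm,
      sub_mul, one_mul, hts]
  have hwΩ : w ∈ Ω := by
    apply ball_infDist_frontier_subset hΩ hy
    rw [mem_ball, dist_comm, hyw]
    linarith
  have hwd : 3 * d / 4 ≤ infDist w (frontier Ω) := by
    have h := Metric.infDist_le_infDist_add_dist (x := y) (y := w) (s := frontier Ω)
    rw [hyw] at h
    linarith
  refine ⟨w, ⟨hwΩ, ?_⟩, ?_⟩
  · have h1 : dist z w < (3/4 + q/2) * d := by rw [hzw]; nlinarith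
    have h2 : (3/4 + q/2) * d ≤ (1 + q) * (3 * d / 4) := by nlinarith
    have h3 : (1 + q) * (3 * d / 4) ≤ (1 + q) * infDist w (frontier Ω) := by nlinarith
    linarith
  · rw [hzw]; nlinarith

/-- Corkscrew-type lemma: if `Ω` carries volume at least `δ rⁿ` in `B(x,r)` and `∂Ω` is
Ahlfors regular, then there is a point of `Ω ∩ B(x,r)` at distance `≳ r` from `∂Ω`. -/
lemma aux_corkscrew (hn : 1 ≤ n) {Ω : Set (Euc n)} (hΩ : IsOpen Ω) {C : ℝ}
    (hAR : AhlforsRegularWith n (frontier Ω) C) {δ : ℝ} (hδ : 0 < δ) :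
    ∃ c : ℝ, 0 < c ∧ c ≤ 1 ∧ ∀ x ∈ frontier Ω, ∀ r : ℝ, 0 < r →
      ENNReal.ofReal (4 * r) < 2 * EMetric.diam (frontier Ω) →
      ENNReal.ofReal δ * ENNReal.ofReal (r ^ n) < volume (Ω ∩ ball x r) →
      ∃ y, y ∈ Ω ∧ dist x y < r ∧ c * r ≤ infDist y (frontier Ω) := by
  obtain ⟨hC, hFc, hbounds⟩ := hAR
  have hC0 : (0:ℝ) < C := lt_trans one_pos hC
  set ω := volume (ball (0 : Euc n) 1) with hω
  have hωfin : ω ≠ ∞ := measure_ball_lt_top.ne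
  set K : ℝ≥0∞ := ω * ENNReal.ofReal (5^n * 4^(n-1) * C^2) with hK
  have hKfin : K ≠ ∞ := ENNReal.mul_ne_top hωfin ENNReal.ofReal_ne_top
  set c : ℝ := min 1 (δ / (2 * (K.toReal + 1))) with hc
  have hKnn : 0 ≤ K.toReal := ENNReal.toReal_nonneg
  have hc0 : 0 < c := lt_min one_pos (div_pos hδ (by positivity))
  have hc1 : c ≤ 1 := min_le_left _ _
  refine ⟨c, hc0, hc1, ?_⟩
  intro x hxF r hr hscale hvol
  by_contra hcon
  push_neg at hcon
  have hFne : (frontier Ω).Nonempty := ⟨x, hxF⟩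
  have hcr : 0 < c * r := mul_pos hc0 hr
  set T := frontier Ω ∩ ball x (2*r) with hT
  have hcov : Ω ∩ ball x r ⊆ ⋃ z ∈ T, closedBall z (c*r) := by
    rintro y ⟨hyΩ, hyb⟩
    have h1 : infDist y (frontier Ω) < c * r :=
      hcon y hyΩ (by rw [dist_comm]; exact mem_ball.mp hyb)
    obtain ⟨z, hzF, hyz⟩ := (Metric.infDist_lt_iff hFne).mp h1
    have hzT : z ∈ T := by
      refine ⟨hzF, mem_ball.mpr ?_⟩
      calc dist z x ≤ dist z y + dist y x := dist_triangle _ _ _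
        _ < c*r + r := add_lt_add (by rwa [dist_comm]) (mem_ball.mp hyb)
        _ ≤ 2*r := by nlinarith
    exact mem_biUnion hzT (mem_closedBall.mpr hyz.le)
  obtain ⟨u, huT, hdisj, hcover⟩ :=
    Vitali.exists_disjoint_subfamily_covering_enlargement_closedBall T id (fun _ => c*r) (c*r)
      (fun a _ => le_rfl) 5 (by norm_num)
  have hucnt : u.Countable := by
    refine Set.PairwiseDisjoint.countable_of_isOpen
      (s := fun b : Euc n => ball b (c*r)) (hdisj.mono ?_) ?_ ?_
    · intro b; exact ball_subset_closedBall
    · intro b _; exact isOpen_ball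
    · intro b _; exact nonempty_ball.mpr hcr
  have hpowc : (c*r)^n = (c*r) * (c*r)^(n-1) := by
    conv_lhs => rw [show n = (n-1)+1 from (Nat.succ_pred_eq_of_pos hn).symm]
    rw [pow_succ']
  have key : ∀ b ∈ u, volume (closedBall b (5*(c*r))) ≤
      (ω * ENNReal.ofReal (5^n * C * (c*r))) *
        μH[(n:ℝ)-1] (frontier Ω ∩ closedBall b (c*r)) := by
    intro b hb
    have hbF : b ∈ frontier Ω := (huT hb).1
    have hcr4 : ENNReal.ofReal (c*r) < 2 * EMetric.diam (frontier Ω) :=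
      lt_of_le_of_lt (ENNReal.ofReal_le_ofReal (by nlinarith)) hscale
    have hlow : ENNReal.ofReal (C⁻¹ * (c*r)^(n-1)) ≤
        μH[(n:ℝ)-1] (frontier Ω ∩ ball b (c*r)) :=
      (hbounds b hbF (c*r) hcr hcr4).1
    have hvolb : volume (closedBall b (5*(c*r))) = ENNReal.ofReal ((5*(c*r))^n) * ω := by
      rw [Measure.addHaar_closedBall volume b (by positivity), finrank_euclideanSpace_fin]
    have halg : (5*(c*r))^n = (5^n * C * (c*r)) * (C⁻¹ * (c*r)^(n-1)) := by
      rw [mul_pow, hpowc]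
      field_simp
    calc volume (closedBall b (5*(c*r)))
        = ω * (ENNReal.ofReal (5^n*C*(c*r)) * ENNReal.ofReal (C⁻¹*(c*r)^(n-1))) := by
          rw [hvolb, ← ENNReal.ofReal_mul (by positivity), ← halg]; ring
      _ ≤ ω * (ENNReal.ofReal (5^n*C*(c*r)) * μH[(n:ℝ)-1] (frontier Ω ∩ ball b (c*r))) := by
          gcongr
      _ ≤ _ := by
          rw [← mul_assoc]
          gcongr
          exact ball_subset_closedBall
  have hdisj' : u.PairwiseDisjoint (fun b => frontier Ω ∩ closedBall b (c*r)) :=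
    hdisj.mono (fun b => inter_subset_right)
  have hsum : volume (Ω ∩ ball x r) ≤
      (ω * ENNReal.ofReal (5^n*C*(c*r))) * μH[(n:ℝ)-1] (frontier Ω ∩ ball x (4*r)) := by
    calc volume (Ω ∩ ball x r) ≤ volume (⋃ b ∈ u, closedBall b (5*(c*r))) := by
          apply measure_mono
          refine hcov.trans (iUnion₂_subset fun z hz => ?_)
          obtain ⟨b, hbu, hsub⟩ := hcover z hz
          intro w hw
          exact mem_biUnion hbu (hsub hw)
      _ ≤ ∑' b : u, volume (closedBall (b:Euc n) (5*(c*r))) := measure_biUnion_le volume hucnt _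
      _ ≤ ∑' b : u, (ω * ENNReal.ofReal (5^n*C*(c*r))) *
            μH[(n:ℝ)-1] (frontier Ω ∩ closedBall (b:Euc n) (c*r)) :=
          ENNReal.tsum_le_tsum (fun b => key b b.2)
      _ = (ω * ENNReal.ofReal (5^n*C*(c*r))) *
            ∑' b : u, μH[(n:ℝ)-1] (frontier Ω ∩ closedBall (b:Euc n) (c*r)) :=
          ENNReal.tsum_mul_left
      _ = (ω * ENNReal.ofReal (5^n*C*(c*r))) *
            μH[(n:ℝ)-1] (⋃ b ∈ u, frontier Ω ∩ closedBall b (c*r)) := by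
          rw [measure_biUnion hucnt hdisj'
            (fun b _ => hFc.measurableSet.inter measurableSet_closedBall)]
      _ ≤ _ := by
          gcongr
          refine iUnion₂_subset fun b hb => ?_
          rintro w ⟨hwF, hwb⟩
          refine ⟨hwF, mem_ball.mpr ?_⟩
          have h1 : dist b x < 2*r := mem_ball.mp (huT hb).2
          have h2 : dist w b ≤ c*r := mem_closedBall.mp hwb
          calc dist w x ≤ dist w b + dist b x := dist_triangle _ _ _
            _ < c*r + 2*r := by linarith
            _ ≤ 4*r := by nlinarith
  have hup : μH[(n:ℝ)-1] (frontier Ω ∩ ball x (4*r)) ≤ ENNReal.ofReal (C * (4*r)^(n-1)) :=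
    (hbounds x hxF (4*r) (by positivity) hscale).2
  have hpowr : r^n = r * r^(n-1) := by
    conv_lhs => rw [show n = (n-1)+1 from (Nat.succ_pred_eq_of_pos hn).symm]
    rw [pow_succ']
  have hfinal : volume (Ω ∩ ball x r) ≤ K * ENNReal.ofReal c * ENNReal.ofReal (r^n) := by
    refine hsum.trans ?_
    calc (ω * ENNReal.ofReal (5^n*C*(c*r))) * μH[(n:ℝ)-1] (frontier Ω ∩ ball x (4*r))
        ≤ (ω * ENNReal.ofReal (5^n*C*(c*r))) * ENNReal.ofReal (C*(4*r)^(n-1)) := by gcongr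
      _ = K * ENNReal.ofReal c * ENNReal.ofReal (r^n) := by
          have hXY : ENNReal.ofReal (5^n*C*(c*r)) * ENNReal.ofReal (C*(4*r)^(n-1))
              = ENNReal.ofReal (5^n*4^(n-1)*C^2) * (ENNReal.ofReal c * ENNReal.ofReal (r^n)) := by
            rw [← ENNReal.ofReal_mul
                (mul_nonneg (mul_nonneg (by positivity) hC0.le) hcr.le),
              ← ENNReal.ofReal_mul hc0.le,
              ← ENNReal.ofReal_mul (by positivity : (0:ℝ) ≤ 5^n*4^(n-1)*C^2)]
            congr 1
            rw [mul_pow, hpowr]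
            ring
          rw [hK, mul_assoc ω, hXY]
          ring
  have h1 : K * ENNReal.ofReal c < ENNReal.ofReal δ := by
    have hreal : K.toReal * c < δ := by
      have h2 : c ≤ δ / (2 * (K.toReal + 1)) := min_le_right _ _
      have h3 : K.toReal * c ≤ K.toReal * (δ / (2 * (K.toReal + 1))) := by
        apply mul_le_mul_of_nonneg_left h2 hKnn
      have h4 : K.toReal * (δ / (2 * (K.toReal + 1))) = (K.toReal * δ) / (2 * (K.toReal + 1)) := by
        ring
      have h5 : (K.toReal * δ) / (2 * (K.toReal + 1)) < δ := by
        rw [div_lt_iff₀ (by positivity)]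
        nlinarith
      linarith
    calc K * ENNReal.ofReal c = ENNReal.ofReal K.toReal * ENNReal.ofReal c := by
          rw [ENNReal.ofReal_toReal hKfin]
      _ = ENNReal.ofReal (K.toReal * c) := (ENNReal.ofReal_mul hKnn).symm
      _ < ENNReal.ofReal δ := ENNReal.ofReal_lt_ofReal_iff hδ |>.mpr hreal
  have hlt : K * ENNReal.ofReal c * ENNReal.ofReal (r^n) <
      ENNReal.ofReal δ * ENNReal.ofReal (r^n) :=
    (ENNReal.mul_lt_mul_iff_left (ENNReal.ofReal_pos.mpr (by positivity)).ne'
      ENNReal.ofReal_ne_top).mpr h1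
  exact lt_irrefl _ ((hvol.trans_le hfinal).trans hlt)

/-- The set of boundary points of positive upper density which are `q`-inaccessible at
scale `ρ` is `ℋ^{n-1}`-null. -/
lemma aux_strata_null (hn : 1 ≤ n) {Ω : Set (Euc n)} (hΩ : IsOpen Ω) {C : ℝ}
    (hAR : AhlforsRegularWith n (frontier Ω) C)
    (hD : EMetric.diam (frontier Ω) ≠ 0) {q ρ : ℝ} (hq0 : 0 < q) (hq1 : q ≤ 1) (hρ : 0 < ρ) :
    μH[(n:ℝ)-1] {x | x ∈ mtBoundary n Ω ∧ ∀ w ∈ ntRegion Ω q x, ρ ≤ dist x w} = 0 := by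
  obtain ⟨hC, hFc, hbounds⟩ := id hAR
  have hC0 : (0:ℝ) < C := one_pos.trans hC
  set E := {x | x ∈ mtBoundary n Ω ∧ ∀ w ∈ ntRegion Ω q x, ρ ≤ dist x w} with hE
  have hEF : E ⊆ frontier Ω := fun x hx => mtBoundary_subset_frontier hΩ hx.1
  -- admissible scales
  obtain ⟨R, hR0, hRsc⟩ : ∃ R : ℝ, 0 < R ∧ ∀ s : ℝ, 0 < s → s ≤ R →
      ENNReal.ofReal s < 2 * EMetric.diam (frontier Ω) := by
    rcases eq_or_ne (EMetric.diam (frontier Ω)) ∞ with htop | hfin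
    · exact ⟨1, one_pos, fun s _ _ => by
        rw [htop, ENNReal.mul_top (by norm_num)]
        exact ENNReal.ofReal_lt_top⟩
    · have ht : 0 < (EMetric.diam (frontier Ω)).toReal := ENNReal.toReal_pos hD hfin
      refine ⟨(EMetric.diam (frontier Ω)).toReal / 2, by positivity, fun s hs0 hsR => ?_⟩
      calc ENNReal.ofReal s ≤ ENNReal.ofReal ((EMetric.diam (frontier Ω)).toReal / 2) :=
            ENNReal.ofReal_le_ofReal hsR
        _ < ENNReal.ofReal ((EMetric.diam (frontier Ω)).toReal) := by
            rw [ENNReal.ofReal_lt_ofReal_iff ht]; linarith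
        _ = EMetric.diam (frontier Ω) := ENNReal.ofReal_toReal hfin
        _ ≤ 2 * EMetric.diam (frontier Ω) := by
            nth_rewrite 1 [← one_mul (EMetric.diam (frontier Ω))]
            exact mul_le_mul_left one_le_two _
  set μt := μH[(n:ℝ)-1].restrict (frontier Ω) with hμt
  haveI hloc : IsLocallyFiniteMeasure μt := by
    constructor
    intro x
    by_cases hxF : x ∈ frontier Ω
    · refine ⟨ball x R, ball_mem_nhds x hR0, ?_⟩
      rw [hμt, Measure.restrict_apply' hFc.measurableSet]
      calc μH[(n:ℝ)-1] (ball x R ∩ frontier Ω) ≤ ENNReal.ofReal (C * R^(n-1)) := by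
            rw [inter_comm]; exact (hbounds x hxF R hR0 (hRsc R hR0 le_rfl)).2
        _ < ∞ := ENNReal.ofReal_lt_top
    · refine ⟨(frontier Ω)ᶜ, (hFc.isOpen_compl).mem_nhds hxF, ?_⟩
      rw [hμt, Measure.restrict_apply' hFc.measurableSet, compl_inter_self]
      simp
  have hdens := Besicovitch.ae_tendsto_measure_inter_div μt E
  -- pointwise failure of density 1 at every point of E
  have hfail : ∀ x ∈ E, ¬ Tendsto
      (fun r => μt (E ∩ closedBall x r) / μt (closedBall x r)) (𝓝[>] (0:ℝ)) (𝓝 1) := by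
    rintro x ⟨hxmt, hxq⟩ hT
    have hxF : x ∈ frontier Ω := hEF ⟨hxmt, hxq⟩
    -- pick δ below the upper density
    obtain ⟨δ', hδ'0, hδ'lt⟩ := exists_between hxmt.1
    have hδ''0 : 0 < min δ' 1 := lt_min hδ'0 one_pos
    have hδ''top : min δ' 1 ≠ ∞ := ne_top_of_le_ne_top ENNReal.one_ne_top (min_le_right _ _)
    set δ := (min δ' 1).toReal with hδdef
    have hδ0 : 0 < δ := ENNReal.toReal_pos hδ''0.ne' hδ''top
    have hδeq : ENNReal.ofReal δ = min δ' 1 := ENNReal.ofReal_toReal hδ''top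
    obtain ⟨c, hc0, hc1, hcs⟩ := aux_corkscrew hn hΩ hAR hδ0
    set b := min (q*c/8) 1 with hb
    have hb0 : 0 < b := lt_min (by positivity) one_pos
    have hb1 : b ≤ 1 := min_le_right _ _
    set e := ENNReal.ofReal (C⁻¹*C⁻¹ * (b/4)^(n-1)) with he
    have he0 : e ≠ 0 := (ENNReal.ofReal_pos.mpr (by positivity)).ne'
    -- tendsto along 3r
    have h3 : Tendsto (fun r : ℝ => 3*r) (𝓝[>] 0) (𝓝[>] 0) := by
      apply tendsto_nhdsWithin_of_tendsto_nhds_of_eventually_within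
      · have : Tendsto (fun r : ℝ => 3*r) (𝓝 0) (𝓝 (3*0)) :=
          (continuous_const.mul continuous_id).tendsto 0
        rw [mul_zero] at this
        exact this.mono_left nhdsWithin_le_nhds
      · filter_upwards [self_mem_nhdsWithin] with r hr
        exact mem_Ioi.mpr (by nlinarith [mem_Ioi.mp hr])
    have hsub1 : (1:ℝ≥0∞) - e < 1 := ENNReal.sub_lt_self ENNReal.one_ne_top one_ne_zero he0
    have hev3 : ∀ᶠ r : ℝ in 𝓝[>] 0,
        1 - e < μt (E ∩ closedBall x (3*r)) / μt (closedBall x (3*r)) := by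
      have := (hT.comp h3).eventually (eventually_gt_nhds hsub1)
      simpa [Function.comp] using this
    have hfreq : ∃ᶠ r : ℝ in 𝓝[>] 0,
        min δ' 1 < volume (Ω ∩ ball x r) / ENNReal.ofReal (r^n) :=
      frequently_lt_of_lt_limsup (h := lt_of_le_of_lt (min_le_left _ _) hδ'lt)
    have hrstar0 : 0 < min (R/4) (ρ/2) := lt_min (by positivity) (by positivity)
    have hevsmall : ∀ᶠ r : ℝ in 𝓝[>] 0, r < min (R/4) (ρ/2) :=
      (eventually_lt_nhds hrstar0).filter_mono nhdsWithin_le_nhds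
    obtain ⟨r, hvolr, ⟨hr_rst, hr0'⟩, hlt3⟩ :=
      (hfreq.and_eventually ((hevsmall.and self_mem_nhdsWithin).and hev3)).exists
    have hr0 : 0 < r := mem_Ioi.mp hr0'
    have hrR : 4*r ≤ R := by
      have := lt_of_lt_of_le hr_rst (min_le_left _ _); linarith
    have hrρ : 2*r ≤ ρ := by
      have := lt_of_lt_of_le hr_rst (min_le_right _ _); linarith
    -- convert the density info into a volume lower bound
    have hrn0 : ENNReal.ofReal (r^n) ≠ 0 := (ENNReal.ofReal_pos.mpr (by positivity)).ne'
    have hvol : ENNReal.ofReal δ * ENNReal.ofReal (r^n) < volume (Ω ∩ ball x r) := by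
      rw [hδeq]
      calc min δ' 1 * ENNReal.ofReal (r^n)
          < (volume (Ω ∩ ball x r) / ENNReal.ofReal (r^n)) * ENNReal.ofReal (r^n) :=
            (ENNReal.mul_lt_mul_iff_left hrn0 ENNReal.ofReal_ne_top).mpr hvolr
        _ = volume (Ω ∩ ball x r) := ENNReal.div_mul_cancel hrn0 ENNReal.ofReal_ne_top
    have hscale4 : ENNReal.ofReal (4*r) < 2 * EMetric.diam (frontier Ω) :=
      hRsc (4*r) (by positivity) hrR
    obtain ⟨y, hyΩ, hxy, hcd⟩ := hcs x hxF r hr0 hscale4 hvol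
    set d := infDist y (frontier Ω) with hd
    have hd0 : 0 < d := lt_of_lt_of_le (by positivity) hcd
    have hdr : d ≤ dist x y := by
      rw [dist_comm]; exact Metric.infDist_le_dist_of_mem hxF
    have hdltr : d < r := lt_of_le_of_lt hdr hxy
    obtain ⟨zs, hzsF, hzsd⟩ := hFc.exists_infDist_eq_dist ⟨x, hxF⟩ y
    have hbr0 : 0 < b*r := mul_pos hb0 hr0
    -- points of the contact ball are not in E
    have hGE : ∀ z ∈ frontier Ω ∩ ball zs (b*r), z ∉ E := by
      rintro z ⟨hzF, hzb⟩ hzE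
      have hzszs : dist zs y = d := by rw [dist_comm]; exact hzsd.symm
      have hbrq : b*r ≤ (q/8)*d := by
        have h1 : b*r ≤ (q*c/8)*r := mul_le_mul_of_nonneg_right (min_le_left _ _) hr0.le
        have h2 : (q*c/8)*r = (q/8)*(c*r) := by ring
        have h3 : (q/8)*(c*r) ≤ (q/8)*d := mul_le_mul_of_nonneg_left hcd (by positivity)
        linarith
      have hzy : dist z y < (1 + q/2) * d := by
        calc dist z y ≤ dist z zs + dist zs y := dist_triangle _ _ _
          _ < b*r + d := by
              have := mem_ball.mp hzb; rw [hzszs]; linarith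
          _ ≤ (q/8)*d + d := by linarith
          _ < (1+q/2)*d := by nlinarith
      obtain ⟨w, hwnt, hwρ⟩ := aux_access (ρ := ρ) hΩ hq0 hq1 hzF hyΩ hd0 (by rw [← hd]; linarith) hzy
      exact absurd (hzE.2 w hwnt) (not_le.mpr hwρ)
    -- measure estimates
    have hGS : frontier Ω ∩ ball zs (b*r) ⊆ frontier Ω ∩ closedBall x (3*r) := by
      rintro z ⟨hzF, hzb⟩
      refine ⟨hzF, mem_closedBall.mpr ?_⟩
      have h1 : dist z zs < b*r := mem_ball.mp hzb
      have h2 : dist zs y = d := by rw [dist_comm]; exact hzsd.symm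
      have h3 : dist y x < r := by rw [dist_comm]; exact hxy
      have hbr_le : b*r ≤ r := by nlinarith
      calc dist z x ≤ dist z zs + dist zs x := dist_triangle _ _ _
        _ ≤ dist z zs + (dist zs y + dist y x) := by linarith [dist_triangle zs y x]
        _ ≤ 3*r := by linarith
    have hGmeas : MeasurableSet (frontier Ω ∩ ball zs (b*r)) :=
      hFc.measurableSet.inter measurableSet_ball
    have hGlow : ENNReal.ofReal (C⁻¹ * (b*r)^(n-1)) ≤
        μH[(n:ℝ)-1] (frontier Ω ∩ ball zs (b*r)) := by
      refine (hbounds zs hzsF (b*r) hbr0 (hRsc _ hbr0 ?_)).1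
      nlinarith
    have hSup : μH[(n:ℝ)-1] (frontier Ω ∩ closedBall x (3*r)) ≤
        ENNReal.ofReal (C * (4*r)^(n-1)) := by
      calc μH[(n:ℝ)-1] (frontier Ω ∩ closedBall x (3*r))
          ≤ μH[(n:ℝ)-1] (frontier Ω ∩ ball x (4*r)) :=
            measure_mono (inter_subset_inter_right _ (closedBall_subset_ball (by linarith)))
        _ ≤ _ := (hbounds x hxF (4*r) (by positivity) hscale4).2
    have hSfin : μH[(n:ℝ)-1] (frontier Ω ∩ closedBall x (3*r)) ≠ ∞ :=
      (lt_of_le_of_lt hSup ENNReal.ofReal_lt_top).ne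
    have hGfin : μH[(n:ℝ)-1] (frontier Ω ∩ ball zs (b*r)) ≠ ∞ :=
      (lt_of_le_of_lt (measure_mono hGS) (lt_of_le_of_lt hSup ENNReal.ofReal_lt_top)).ne
    have heS : e * μH[(n:ℝ)-1] (frontier Ω ∩ closedBall x (3*r)) ≤
        μH[(n:ℝ)-1] (frontier Ω ∩ ball zs (b*r)) := by
      calc e * μH[(n:ℝ)-1] (frontier Ω ∩ closedBall x (3*r))
          ≤ e * ENNReal.ofReal (C * (4*r)^(n-1)) := mul_le_mul_right hSup _
        _ = ENNReal.ofReal ((C⁻¹*C⁻¹ * (b/4)^(n-1)) * (C * (4*r)^(n-1))) := by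
            rw [he, ← ENNReal.ofReal_mul (by positivity)]
        _ ≤ ENNReal.ofReal (C⁻¹ * (b*r)^(n-1)) := by
            apply ENNReal.ofReal_le_ofReal
            apply le_of_eq
            rw [div_pow, mul_pow, mul_pow]
            field_simp
        _ ≤ _ := hGlow
    have hμtS : μt (closedBall x (3*r)) = μH[(n:ℝ)-1] (frontier Ω ∩ closedBall x (3*r)) := by
      rw [hμt, Measure.restrict_apply' hFc.measurableSet, inter_comm]
    have hnum : μt (E ∩ closedBall x (3*r)) ≤ (1-e) * μt (closedBall x (3*r)) := by
      have h1 : μt (E ∩ closedBall x (3*r)) =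
          μH[(n:ℝ)-1] (E ∩ closedBall x (3*r) ∩ frontier Ω) := by
        rw [hμt, Measure.restrict_apply' hFc.measurableSet]
      have h2 : E ∩ closedBall x (3*r) ∩ frontier Ω ⊆
          (frontier Ω ∩ closedBall x (3*r)) \ (frontier Ω ∩ ball zs (b*r)) := by
        rintro z ⟨⟨hzE, hzb⟩, hzF⟩
        exact ⟨⟨hzF, hzb⟩, fun hzG => hGE z hzG hzE⟩
      calc μt (E ∩ closedBall x (3*r))
          = μH[(n:ℝ)-1] (E ∩ closedBall x (3*r) ∩ frontier Ω) := h1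
        _ ≤ μH[(n:ℝ)-1] ((frontier Ω ∩ closedBall x (3*r)) \ (frontier Ω ∩ ball zs (b*r))) :=
            measure_mono h2
        _ = μH[(n:ℝ)-1] (frontier Ω ∩ closedBall x (3*r)) -
            μH[(n:ℝ)-1] (frontier Ω ∩ ball zs (b*r)) :=
            measure_diff hGS hGmeas.nullMeasurableSet hGfin
        _ ≤ μH[(n:ℝ)-1] (frontier Ω ∩ closedBall x (3*r)) -
            e * μH[(n:ℝ)-1] (frontier Ω ∩ closedBall x (3*r)) := tsub_le_tsub_left heS _
        _ = (1-e) * μH[(n:ℝ)-1] (frontier Ω ∩ closedBall x (3*r)) := by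
            rw [ENNReal.sub_mul (fun _ _ => hSfin), one_mul]
        _ = (1-e) * μt (closedBall x (3*r)) := by rw [hμtS]
    have hratio : μt (E ∩ closedBall x (3*r)) / μt (closedBall x (3*r)) ≤ 1 - e :=
      ENNReal.div_le_of_le_mul hnum
    exact absurd hlt3 (not_lt.mpr hratio)
  -- conclude via the Besicovitch density theorem
  have hnull : μt E = 0 := by
    apply le_antisymm ?_ zero_le
    have h0 : (μt.restrict E) {x | ¬ Tendsto
        (fun r => μt (E ∩ closedBall x r) / μt (closedBall x r)) (𝓝[>] (0:ℝ)) (𝓝 1)} = 0 :=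
      ae_iff.mp hdens
    calc μt E = μt (E ∩ E) := by rw [inter_self]
      _ ≤ (μt.restrict E) E := Measure.le_restrict_apply _ _
      _ ≤ (μt.restrict E) {x | ¬ Tendsto
          (fun r => μt (E ∩ closedBall x r) / μt (closedBall x r)) (𝓝[>] (0:ℝ)) (𝓝 1)} :=
          measure_mono (fun x hx => hfail x hx)
      _ = 0 := h0
  have hfin : μH[(n:ℝ)-1] (E ∩ frontier Ω) = μt E :=
    (Measure.restrict_apply' hFc.measurableSet).symm
  rw [inter_eq_self_of_subset_left hEF] at hfin
  exact hfin.trans hnull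

end AuxStatement11

/-- for an open nonempty proper subset of `ℝⁿ` with Ahlfors regular
boundary, the measure-theoretic boundary is covered, up to an `ℋ^{n-1}`-null set, by the
nontangentially accessible boundary. -/
theorem statement11 (n : ℕ) (Ω : Set (Euc n)) (hΩ : IsOpen Ω) (hne : Ω.Nonempty)
    (hprop : Ω ≠ univ) (C : ℝ) (hAR : AhlforsRegularWith n (frontier Ω) C) :
    μH[(n : ℝ) - 1] (mtBoundary n Ω \ ntaBoundary n Ω) = 0 := by
  rcases Nat.eq_zero_or_pos n with hn0 | hn
  · subst hn0
    obtain ⟨p, hp⟩ := hne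
    refine absurd (Set.eq_univ_of_forall fun y => ?_) hprop
    have hyp : y = p := Subsingleton.elim y p
    rwa [hyp]
  · by_cases hD : EMetric.diam (frontier Ω) = 0
    · -- the frontier is a single point; every density point is accessible
      have hsub : mtBoundary n Ω ⊆ ntaBoundary n Ω := by
        intro x hx
        have hxF : x ∈ frontier Ω := mtBoundary_subset_frontier hΩ hx
        have hFx : frontier Ω = {x} :=
          Set.eq_singleton_iff_unique_mem.mpr
            ⟨hxF, fun z hz => (EMetric.diam_eq_zero_iff.mp hD) hz hxF⟩
        refine ⟨hxF, fun κ hκ => ?_⟩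
        rw [Metric.mem_closure_iff]
        intro ε hε
        obtain ⟨y, hyΩ, hxy⟩ := aux_close_points hx.1 ε hε
        have hxΩ : x ∉ Ω := (hΩ.frontier_eq ▸ hxF).2
        have hdy : infDist y (frontier Ω) = dist x y := by
          rw [hFx, Metric.infDist_singleton, dist_comm]
        refine ⟨y, ⟨hyΩ, ?_⟩, hxy⟩
        rw [hdy]
        have hxy0 : 0 < dist x y := dist_pos.mpr (fun h => hxΩ (h ▸ hyΩ))
        nlinarith
      rw [Set.diff_eq_empty.mpr hsub]
      exact measure_empty
    · -- main case: cover the inaccessible part by countably many strata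
      have hcover : mtBoundary n Ω \ ntaBoundary n Ω ⊆
          ⋃ (m : ℕ) (l : ℕ), {x | x ∈ mtBoundary n Ω ∧
            ∀ w ∈ ntRegion Ω (1/((m:ℝ)+1)) x, (1/((l:ℝ)+1)) ≤ dist x w} := by
        rintro x ⟨hxmt, hxnta⟩
        have hxF : x ∈ frontier Ω := mtBoundary_subset_frontier hΩ hxmt
        have h1 : ¬ (∀ κ : ℝ, 0 < κ → x ∈ closure (ntRegion Ω κ x)) :=
          fun h => hxnta ⟨hxF, h⟩
        push_neg at h1
        obtain ⟨κ, hκ0, hκ⟩ := h1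
        have h2 : ¬ ∀ ε > (0:ℝ), ∃ y ∈ ntRegion Ω κ x, dist x y < ε :=
          fun h => hκ (Metric.mem_closure_iff.mpr h)
        push_neg at h2
        obtain ⟨ε, hε0, hε⟩ := h2
        obtain ⟨m, hm⟩ := exists_nat_one_div_lt hκ0
        obtain ⟨l, hl⟩ := exists_nat_one_div_lt hε0
        refine mem_iUnion.mpr ⟨m, mem_iUnion.mpr ⟨l, hxmt, ?_⟩⟩
        intro w hw
        have hw' : w ∈ ntRegion Ω κ x := by
          refine ⟨hw.1, lt_of_lt_of_le hw.2 ?_⟩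
          have h3 : (0:ℝ) ≤ infDist w (frontier Ω) := Metric.infDist_nonneg
          nlinarith [hm.le]
        exact le_trans hl.le (hε w hw')
      refine measure_mono_null hcover ?_
      refine measure_iUnion_null fun m => measure_iUnion_null fun l => ?_
      refine aux_strata_null hn hΩ hAR hD (by positivity) ?_ (by positivity)
      rw [div_le_one (by positivity)]
      have : (0:ℝ) ≤ (m:ℝ) := Nat.cast_nonneg m
      linarith
end

section
/- Let Ω ⊆ ℝⁿ be an open set such that: ∂Ω is lower Ahlfors regular (there is c > 0 with ℋ^{n−1}(∂Ω ∩ B(x,r)) ≥ c·r^{n−1} for all x ∈ ∂Ω and r ∈ (0, 2·diam ∂Ω)); ℋ^{n−1}(∂Ω ∖ ∂*Ω) = 0; and σ := ℋ^{n−1} restricted to ∂Ω is a doubling measure on ∂Ω. Fix κ > 0 and let u : Ω → ℝ be Lebesgue measurable, and let f : ∂Ω → ℝ be a function such that for σ-a.e. x ∈ ∂Ω the κ-nontangential trace of u at x exists and equals f(x). Then: (i) f is σ-measurable on ∂Ω; (ii) N^ε_κ u(x) → |f(x)| as ε → 0⁺ for σ-a.e. x ∈ ∂Ω; and (iii) if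 in addition N^δ_κ u ∈ L^p(∂Ω,σ) for some p ∈ (0,∞) and some δ > 0, then f ∈ L^p(∂Ω,σ) and N^ε_κ u → |f| in L^p(∂Ω,σ) as ε → 0⁺. -/
open MeasureTheory Metric Set Filter
open scoped ENNReal NNReal Topology

noncomputable section Aux

variable {n : ℕ}

lemma isOpen_ntRegion {Ω : Set (Euc n)} (hΩ : IsOpen Ω) (κ : ℝ) (x : Euc n) :
    IsOpen (ntRegion Ω κ x) := by
  have : ntRegion Ω κ x = Ω ∩ {y | dist x y < (1 + κ) * infDist y (frontier Ω)} := rfl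
  rw [this]
  exact hΩ.inter (isOpen_lt (continuous_const.dist continuous_id)
    (continuous_const.mul (continuous_infDist_pt _)))

lemma isOpen_collar {Ω : Set (Euc n)} (hΩ : IsOpen Ω) (ε : ℝ) :
    IsOpen (collar Ω ε) := by
  have : collar Ω ε = Ω ∩ {y | infDist y (frontier Ω) < ε} := rfl
  rw [this]
  exact hΩ.inter (isOpen_lt (continuous_infDist_pt _) continuous_const)

open scoped Classical in
lemma sInf_upperSet_eq_iInf (S : Set ℝ≥0∞) (hup : ∀ ⦃a b : ℝ≥0∞⦄, a ∈ S → a ≤ b → b ∈ S)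
    (hmem : sInf S ∈ S) :
    sInf S = ⨅ q : ℚ, if ENNReal.ofReal q ∈ S then ENNReal.ofReal q else ⊤ := by
  apply le_antisymm
  · exact le_iInf fun q => by split_ifs with h; exacts [sInf_le h, le_top]
  · refine le_of_forall_gt_imp_ge_of_dense fun b hb => ?_
    obtain ⟨q, hq0, hq1, hq2⟩ := ENNReal.lt_iff_exists_rat_btwn.mp hb
    have heq : ((Real.toNNReal q : ℝ≥0) : ℝ≥0∞) = ENNReal.ofReal q := rfl
    rw [heq] at hq1 hq2
    have hqS : ENNReal.ofReal q ∈ S := hup hmem hq1.le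
    calc (⨅ q : ℚ, if ENNReal.ofReal q ∈ S then ENNReal.ofReal q else ⊤)
        ≤ if ENNReal.ofReal q ∈ S then ENNReal.ofReal q else ⊤ := iInf_le _ q
      _ = ENNReal.ofReal q := if_pos hqS
      _ ≤ b := hq2.le

lemma rpow_add_le_two_rpow (a b : ℝ≥0∞) {p : ℝ} (hp : 0 ≤ p) :
    (a + b) ^ p ≤ 2 ^ p * (a ^ p + b ^ p) := by
  calc (a + b) ^ p ≤ (2 * (a ⊔ b)) ^ p := by
        apply ENNReal.rpow_le_rpow _ hp
        rw [two_mul]; exact add_le_add le_sup_left le_sup_right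
    _ = 2 ^ p * (a ⊔ b) ^ p := ENNReal.mul_rpow_of_nonneg _ _ hp
    _ ≤ 2 ^ p * (a ^ p + b ^ p) := by
        gcongr
        rcases le_total a b with h | h
        · rw [sup_eq_right.mpr h]; exact le_add_self
        · rw [sup_eq_left.mpr h]; exact le_self_add

set_option maxHeartbeats 1000000 in
lemma measurable_ntMaxOn {Ω : Set (Euc n)} (hΩ : MeasurableSet Ω) (κ : ℝ)
    {S : Set (Euc n)} (hS : MeasurableSet S) {u : Euc n → ℝ} (hu : Measurable u) :
    Measurable fun x => ntMaxOn Ω S κ u x := by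
  set T : Set (Euc n × Euc n) := {p | p.2 ∈ ntRegion Ω κ p.1 ∩ S} with hT_def
  have hT : MeasurableSet T := by
    have h1 : MeasurableSet {p : Euc n × Euc n | p.2 ∈ Ω} := measurable_snd hΩ
    have h2 : MeasurableSet {p : Euc n × Euc n |
        dist p.1 p.2 < (1 + κ) * infDist p.2 (frontier Ω)} :=
      measurableSet_lt (measurable_fst.dist measurable_snd)
        (measurable_const.mul ((continuous_infDist_pt _).measurable.comp measurable_snd))
    have h3 : MeasurableSet {p : Euc n × Euc n | p.2 ∈ S} := measurable_snd hS
    have : T = ({p : Euc n × Euc n | p.2 ∈ Ω} ∩ {p : Euc n × Euc n |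
        dist p.1 p.2 < (1 + κ) * infDist p.2 (frontier Ω)}) ∩ {p : Euc n × Euc n | p.2 ∈ S} := by
      ext p; simp [hT_def, ntRegion, and_assoc]
    rw [this]; exact (h1.inter h2).inter h3
  have hΓ : ∀ x, MeasurableSet (ntRegion Ω κ x ∩ S) := by
    intro x
    have : ntRegion Ω κ x ∩ S = Prod.mk x ⁻¹' T := by ext y; simp [hT_def]
    rw [this]; exact hT.preimage measurable_prodMk_left
  have hkey : ∀ q : ℚ, Measurable fun x =>
      volume (Prod.mk x ⁻¹' (T ∩ {p : Euc n × Euc n | ENNReal.ofReal q < (‖u p.2‖₊ : ℝ≥0∞)})) := by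
    intro q
    apply measurable_measure_prodMk_left
    refine hT.inter ?_
    have hm : Measurable fun p : Euc n × Euc n => (‖u p.2‖₊ : ℝ≥0∞) :=
      (hu.comp measurable_snd).nnnorm.coe_nnreal_ennreal
    exact measurableSet_lt measurable_const hm
  have hmain : ∀ x, ntMaxOn Ω S κ u x = ⨅ q : ℚ,
      if volume (Prod.mk x ⁻¹' (T ∩ {p : Euc n × Euc n | ENNReal.ofReal q < (‖u p.2‖₊ : ℝ≥0∞)})) = 0
      then ENNReal.ofReal q else ⊤ := by
    intro x
    set μx := volume.restrict (ntRegion Ω κ x ∩ S) with hμx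
    set g : Euc n → ℝ≥0∞ := fun y => (‖u y‖₊ : ℝ≥0∞) with hg
    have he : ntMaxOn Ω S κ u x = sInf {a : ℝ≥0∞ | μx {y | a < g y} = 0} := essSup_eq_sInf μx g
    have hmem : sInf {a : ℝ≥0∞ | μx {y | a < g y} = 0} ∈ {a : ℝ≥0∞ | μx {y | a < g y} = 0} := by
      rw [mem_setOf_eq, ← he]
      exact meas_essSup_lt
    have hsInf := sInf_upperSet_eq_iInf {a : ℝ≥0∞ | μx {y | a < g y} = 0}
      (fun a b ha hab => by
        refine measure_mono_null ?_ ha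
        intro y hy; exact lt_of_le_of_lt hab hy) hmem
    rw [he, hsInf]
    congr 1
    ext q
    have hpre : Prod.mk x ⁻¹' (T ∩ {p : Euc n × Euc n | ENNReal.ofReal q < (‖u p.2‖₊ : ℝ≥0∞)})
        = {y | ENNReal.ofReal q < g y} ∩ (ntRegion Ω κ x ∩ S) := by
      ext y; simp [hT_def, hg, and_comm]
    have hset : μx {y | ENNReal.ofReal q < g y}
        = volume ({y | ENNReal.ofReal q < g y} ∩ (ntRegion Ω κ x ∩ S)) :=
      Measure.restrict_apply' (hΓ x)
    rw [mem_setOf_eq, hset, hpre]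
    congr!
  have heq : (fun x => ntMaxOn Ω S κ u x) = fun x => ⨅ q : ℚ,
      if volume (Prod.mk x ⁻¹' (T ∩ {p : Euc n × Euc n | ENNReal.ofReal q < (‖u p.2‖₊ : ℝ≥0∞)})) = 0
      then ENNReal.ofReal q else ⊤ := funext hmain
  rw [heq]
  apply Measurable.iInf
  intro q
  exact Measurable.ite ((hkey q) (measurableSet_singleton 0)) measurable_const measurable_const

lemma ntMaxOn_mono (Ω : Set (Euc n)) (κ : ℝ) (u : Euc n → ℝ) (x : Euc n) {ε δ : ℝ}
    (h : ε ≤ δ) : ntMaxOn Ω (collar Ω ε) κ u x ≤ ntMaxOn Ω (collar Ω δ) κ u x := by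
  refine essSup_mono_measure ?_
  apply Measure.absolutelyContinuous_of_le
  apply Measure.restrict_mono _ le_rfl
  intro y hy
  exact ⟨hy.1, hy.2.1, lt_of_lt_of_le hy.2.2 h⟩

lemma tendsto_ntMaxOn {Ω : Set (Euc n)} (hΩ : IsOpen Ω) {κ : ℝ} (hκ : 0 < κ)
    (u : Euc n → ℝ) {x : Euc n} {v : ℝ} (hx : x ∈ frontier Ω)
    (h : HasNTTrace Ω κ u x v) :
    Tendsto (fun ε : ℝ => ntMaxOn Ω (collar Ω ε) κ u x) (𝓝[>] 0)
      (𝓝 (‖v‖₊ : ℝ≥0∞)) := by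
  obtain ⟨hcl, N, hNsub, hN0, htend⟩ := h
  rw [ENNReal.tendsto_nhds (by simp : ((‖v‖₊ : ℝ≥0∞)) ≠ ⊤)]
  intro θ hθ
  set t : ℝ := (min θ 1).toReal / 2 with ht_def
  have hmin_pos : (0 : ℝ≥0∞) < min θ 1 := lt_min hθ (by norm_num)
  have hmin_ne_top : min θ 1 ≠ ⊤ := ne_top_of_le_ne_top (by norm_num) (min_le_right _ _)
  have ht : 0 < t := by
    have := ENNReal.toReal_pos hmin_pos.ne' hmin_ne_top
    rw [ht_def]; linarith
  have htθ : ENNReal.ofReal t ≤ θ := by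
    calc ENNReal.ofReal t ≤ ENNReal.ofReal ((min θ 1).toReal) := by
          apply ENNReal.ofReal_le_ofReal
          rw [ht_def]
          have := ENNReal.toReal_nonneg (a := min θ 1)
          linarith
      _ = min θ 1 := ENNReal.ofReal_toReal hmin_ne_top
      _ ≤ θ := min_le_left _ _
  obtain ⟨δ, hδ, hδ'⟩ := Metric.tendsto_nhdsWithin_nhds.mp htend t ht
  have h1κ : (0 : ℝ) < 1 + κ := by linarith
  have hev : Ioo (0 : ℝ) (δ / (1 + κ)) ∈ 𝓝[>] (0 : ℝ) :=
    Ioo_mem_nhdsGT_of_mem ⟨le_refl _, div_pos hδ h1κ⟩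
  filter_upwards [hev] with ε hε
  have hεpos : 0 < ε := hε.1
  have hGmeas : MeasurableSet (ntRegion Ω κ x ∩ collar Ω ε) :=
    ((isOpen_ntRegion hΩ κ x).inter (isOpen_collar hΩ ε)).measurableSet
  have hrestr : ∀ᵐ y ∂(volume.restrict (ntRegion Ω κ x ∩ collar Ω ε)), y ∉ N := by
    have h0 : volume.restrict (ntRegion Ω κ x ∩ collar Ω ε) N = 0 :=
      le_antisymm (le_trans (Measure.restrict_le_self N) hN0.le) (zero_le)
    rw [ae_iff]
    simpa [not_not] using h0
  have hmemG : ∀ᵐ y ∂(volume.restrict (ntRegion Ω κ x ∩ collar Ω ε)),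
      y ∈ ntRegion Ω κ x ∩ collar Ω ε := ae_restrict_mem hGmeas
  -- every point of the region with collar ε is close to x
  have hclose : ∀ y ∈ ntRegion Ω κ x ∩ collar Ω ε, dist y x < δ := by
    intro y hy
    have h2 : dist x y < (1 + κ) * infDist y (frontier Ω) := hy.1.2
    have h3 : infDist y (frontier Ω) < ε := hy.2.2
    have : dist x y < (1 + κ) * ε := lt_trans h2 (by nlinarith)
    rw [dist_comm]
    calc dist x y < (1 + κ) * ε := this
      _ < δ := by
          have := hε.2
          rw [lt_div_iff₀ h1κ] at this
          linarith
  constructor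
  · -- lower bound
    have hW : IsOpen (ntRegion Ω κ x ∩ collar Ω ε ∩ ball x δ) :=
      ((isOpen_ntRegion hΩ κ x).inter (isOpen_collar hΩ ε)).inter isOpen_ball
    have hWne : (ntRegion Ω κ x ∩ collar Ω ε ∩ ball x δ).Nonempty := by
      obtain ⟨y, hy⟩ := _root_.mem_closure_iff.mp hcl (ball x (min ε δ)) isOpen_ball
        (mem_ball_self (lt_min hεpos hδ))
      refine ⟨y, ⟨hy.2, hy.2.1, ?_⟩, ?_⟩
      · calc infDist y (frontier Ω) ≤ infDist x (frontier Ω) + dist y x :=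
              infDist_le_infDist_add_dist
          _ = dist y x := by rw [infDist_zero_of_mem hx, zero_add]
          _ < ε := lt_of_lt_of_le (mem_ball.mp hy.1) (min_le_left _ _)
      · exact mem_ball.mpr (lt_of_lt_of_le (mem_ball.mp hy.1) (min_le_right _ _))
    have hWpos : 0 < volume ((ntRegion Ω κ x ∩ collar Ω ε ∩ ball x δ) \ N) := by
      rw [measure_diff_null hN0]
      exact hW.measure_pos volume hWne
    have hlow : (‖v‖₊ : ℝ≥0∞) - ENNReal.ofReal t ≤ ntMaxOn Ω (collar Ω ε) κ u x := by
      by_contra hlt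
      push_neg at hlt
      have hae := ae_le_essSup (μ := volume.restrict (ntRegion Ω κ x ∩ collar Ω ε))
        (f := fun y => (‖u y‖₊ : ℝ≥0∞))
      rw [ae_iff] at hae
      have hsub : (ntRegion Ω κ x ∩ collar Ω ε ∩ ball x δ) \ N ⊆
          {y | ¬ (‖u y‖₊ : ℝ≥0∞) ≤
            essSup (fun y => (‖u y‖₊ : ℝ≥0∞)) (volume.restrict (ntRegion Ω κ x ∩ collar Ω ε))} := by
        intro y hy
        have hyG : y ∈ ntRegion Ω κ x ∩ collar Ω ε := hy.1.1
        have hydist : dist y x < δ := mem_ball.mp hy.1.2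
        have hyuv : dist (u y) v < t := hδ' ⟨hyG.1, hy.2⟩ hydist
        have habs : |v| - t ≤ |u y| := by
          have h1 : |v| - |u y| ≤ |v - u y| := abs_sub_abs_le_abs_sub v (u y)
          rw [Real.dist_eq, abs_sub_comm] at hyuv
          linarith
        have hval : (‖v‖₊ : ℝ≥0∞) - ENNReal.ofReal t ≤ (‖u y‖₊ : ℝ≥0∞) := by
          rw [← enorm_eq_nnnorm, ← enorm_eq_nnnorm, Real.enorm_eq_ofReal_abs, Real.enorm_eq_ofReal_abs, ← ENNReal.ofReal_sub _ ht.le]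
          exact ENNReal.ofReal_le_ofReal habs
        exact not_le.mpr (lt_of_lt_of_le hlt hval)
      have h0 : volume.restrict (ntRegion Ω κ x ∩ collar Ω ε)
          ((ntRegion Ω κ x ∩ collar Ω ε ∩ ball x δ) \ N) = 0 :=
        measure_mono_null hsub hae
      rw [Measure.restrict_apply' hGmeas] at h0
      have : (ntRegion Ω κ x ∩ collar Ω ε ∩ ball x δ) \ N ∩ (ntRegion Ω κ x ∩ collar Ω ε)
          = (ntRegion Ω κ x ∩ collar Ω ε ∩ ball x δ) \ N := by
        apply inter_eq_left.mpr
        intro y hy; exact hy.1.1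
      rw [this] at h0
      exact absurd h0 hWpos.ne'
    calc (‖v‖₊ : ℝ≥0∞) - θ ≤ (‖v‖₊ : ℝ≥0∞) - ENNReal.ofReal t := tsub_le_tsub_left htθ _
      _ ≤ _ := hlow
  · -- upper bound
    have hupper : ntMaxOn Ω (collar Ω ε) κ u x ≤ (‖v‖₊ : ℝ≥0∞) + ENNReal.ofReal t := by
      refine essSup_le_of_ae_le _ ?_
      filter_upwards [hrestr, hmemG] with y hyN hyG
      have hydist : dist y x < δ := hclose y hyG
      have hyuv : dist (u y) v < t := hδ' ⟨hyG.1, hyN⟩ hydist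
      have habs : |u y| ≤ |v| + t := by
        rw [Real.dist_eq] at hyuv
        calc |u y| = |v + (u y - v)| := by ring_nf
          _ ≤ |v| + |u y - v| := abs_add_le _ _
          _ ≤ |v| + t := by linarith
      rw [← enorm_eq_nnnorm, ← enorm_eq_nnnorm, Real.enorm_eq_ofReal_abs, Real.enorm_eq_ofReal_abs]
      calc ENNReal.ofReal |u y| ≤ ENNReal.ofReal (|v| + t) := ENNReal.ofReal_le_ofReal habs
        _ = ENNReal.ofReal |v| + ENNReal.ofReal t := ENNReal.ofReal_add (abs_nonneg _) ht.le
    calc ntMaxOn Ω (collar Ω ε) κ u x ≤ (‖v‖₊ : ℝ≥0∞) + ENNReal.ofReal t := hupper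
      _ ≤ (‖v‖₊ : ℝ≥0∞) + θ := add_le_add_right htθ _

end Aux

/-- measurability of nontangential traces, pointwise a.e. convergence of
the truncated nontangential maximal functions to `|f|`, and convergence in `L^p`. -/
theorem statement12 (n : ℕ) (hn : 2 ≤ n)
    (Ω : Set (Euc n)) (hΩ : IsOpen Ω)
    (c : ℝ) (hc : 0 < c)
    (hlAR : ∀ x ∈ frontier Ω, ∀ r : ℝ, 0 < r →
      ENNReal.ofReal r < 2 * EMetric.diam (frontier Ω) →
      ENNReal.ofReal (c * r ^ (n - 1)) ≤ μH[(n : ℝ) - 1] (frontier Ω ∩ ball x r))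
    (hmt : μH[(n : ℝ) - 1] (frontier Ω \ mtBoundary n Ω) = 0)
    (σ : Measure (Euc n)) (hσ : σ = (μH[(n : ℝ) - 1]).restrict (frontier Ω))
    (hdbl : ∃ Cd : ℝ≥0∞, Cd < ⊤ ∧ ∀ x ∈ frontier Ω, ∀ r : ℝ, 0 < r →
      σ (ball x (2 * r) ∩ frontier Ω) ≤ Cd * σ (ball x r ∩ frontier Ω))
    (κ : ℝ) (hκ : 0 < κ)
    (u : Euc n → ℝ) (hu : Measurable u)
    (f : Euc n → ℝ)
    (htr : ∀ᵐ x ∂σ, HasNTTrace Ω κ u x (f x)) :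
    -- (i) f is σ-measurable
    AEMeasurable f σ ∧
    -- (ii) N^ε_κ u (x) → |f(x)| as ε → 0⁺, for σ-a.e. x
    (∀ᵐ x ∂σ, Tendsto (fun ε : ℝ => ntMaxOn Ω (collar Ω ε) κ u x) (𝓝[>] 0)
      (𝓝 (‖f x‖₊ : ℝ≥0∞))) ∧
    -- (iii) if N^δ_κ u ∈ L^p then f ∈ L^p and N^ε_κ u → |f| in L^p as ε → 0⁺
    (∀ p : ℝ, 0 < p → ∀ δ : ℝ, 0 < δ →
      ∫⁻ x, (ntMaxOn Ω (collar Ω δ) κ u x) ^ p ∂σ < ⊤ →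
      (∫⁻ x, (‖f x‖₊ : ℝ≥0∞) ^ p ∂σ < ⊤ ∧
        Tendsto (fun ε : ℝ =>
            ∫⁻ x, (ENNReal.ofReal (abs ((ntMaxOn Ω (collar Ω ε) κ u x).toReal - abs (f x)))) ^ p ∂σ)
          (𝓝[>] 0) (𝓝 0))) := by

  have hfr : ∀ᵐ x ∂σ, x ∈ frontier Ω := by
    rw [hσ]; exact ae_restrict_mem isClosed_frontier.measurableSet
  have hcollar : ∀ ε : ℝ, MeasurableSet (collar Ω ε) := fun ε => (isOpen_collar hΩ ε).measurableSet
  -- Part (ii)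
  have hii : ∀ᵐ x ∂σ, Tendsto (fun ε : ℝ => ntMaxOn Ω (collar Ω ε) κ u x) (𝓝[>] 0)
      (𝓝 (‖f x‖₊ : ℝ≥0∞)) := by
    filter_upwards [htr, hfr] with x hx hxf
    exact tendsto_ntMaxOn hΩ hκ u hxf hx
  have hseq : Tendsto (fun k : ℕ => (1 : ℝ) / (k + 1)) atTop (𝓝[>] (0 : ℝ)) := by
    apply tendsto_nhdsWithin_of_tendsto_nhds_of_eventually_within
    · exact tendsto_one_div_add_atTop_nhds_zero_nat
    · exact Filter.Eventually.of_forall fun k => mem_Ioi.mpr (by positivity)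
  -- Part (i)
  have hmeasaux : ∀ w : Euc n → ℝ, Measurable w → ∀ b : Euc n → ℝ,
      (∀ᵐ x ∂σ, HasNTTrace Ω κ w x (b x)) →
      AEMeasurable (fun x => (‖b x‖₊ : ℝ≥0∞)) σ := by
    intro w hw b hb
    have hten : ∀ᵐ x ∂σ, Tendsto (fun k : ℕ => ntMaxOn Ω (collar Ω (1 / (k + 1))) κ w x) atTop
        (𝓝 (‖b x‖₊ : ℝ≥0∞)) := by
      filter_upwards [hb, hfr] with x hx hxf
      exact (tendsto_ntMaxOn hΩ hκ w hxf hx).comp hseq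
    exact aemeasurable_of_tendsto_metrizable_ae atTop
      (fun k => (measurable_ntMaxOn hΩ.measurableSet κ (hcollar _) hw).aemeasurable) hten
  have htrmax : ∀ᵐ x ∂σ, HasNTTrace Ω κ (fun y => max (u y) 0) x (max (f x) 0) := by
    filter_upwards [htr] with x hx
    obtain ⟨hcl, N, h1, h2, h3⟩ := hx
    exact ⟨hcl, N, h1, h2, h3.max tendsto_const_nhds⟩
  have htrneg : ∀ᵐ x ∂σ, HasNTTrace Ω κ (fun y => max (-u y) 0) x (max (-f x) 0) := by
    filter_upwards [htr] with x hx
    obtain ⟨hcl, N, h1, h2, h3⟩ := hx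
    exact ⟨hcl, N, h1, h2, h3.neg.max tendsto_const_nhds⟩
  have hpos : AEMeasurable (fun x => max (f x) 0) σ := by
    have h1 := hmeasaux _ (hu.max measurable_const) _ htrmax
    have h2 := ENNReal.measurable_toReal.comp_aemeasurable h1
    have h3 : (ENNReal.toReal ∘ fun x => ((‖max (f x) 0‖₊ : ℝ≥0∞))) = fun x => max (f x) 0 := by
      funext x
      simp only [Function.comp_apply]
      rw [ENNReal.coe_toReal, coe_nnnorm, Real.norm_eq_abs, abs_of_nonneg (le_max_right _ _)]
    rwa [h3] at h2
  have hneg : AEMeasurable (fun x => max (-f x) 0) σ := by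
    have h1 := hmeasaux _ ((hu.neg).max measurable_const) _ htrneg
    have h2 := ENNReal.measurable_toReal.comp_aemeasurable h1
    have h3 : (ENNReal.toReal ∘ fun x => ((‖max (-f x) 0‖₊ : ℝ≥0∞))) = fun x => max (-f x) 0 := by
      funext x
      simp only [Function.comp_apply]
      rw [ENNReal.coe_toReal, coe_nnnorm, Real.norm_eq_abs, abs_of_nonneg (le_max_right _ _)]
    rwa [h3] at h2
  have hf_meas : AEMeasurable f σ := by
    have heq : f = fun x => max (f x) 0 - max (-f x) 0 :=
      funext fun x => (max_zero_sub_max_neg_zero_eq_self (f x)).symm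
    rw [heq]; exact hpos.sub hneg
  refine ⟨hf_meas, hii, ?_⟩
  -- Part (iii)
  intro p hp δ hδ hint
  have hNδ : Measurable fun x => ntMaxOn Ω (collar Ω δ) κ u x :=
    measurable_ntMaxOn hΩ.measurableSet κ (hcollar _) hu
  have hfle : ∀ᵐ x ∂σ, (‖f x‖₊ : ℝ≥0∞) ≤ ntMaxOn Ω (collar Ω δ) κ u x := by
    filter_upwards [hii] with x hx
    refine le_of_tendsto hx ?_
    filter_upwards [Ioo_mem_nhdsGT_of_mem ⟨le_refl (0 : ℝ), hδ⟩] with ε hε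
    exact ntMaxOn_mono Ω κ u x hε.2.le
  have hffin : ∫⁻ x, (‖f x‖₊ : ℝ≥0∞) ^ p ∂σ < ⊤ := by
    refine lt_of_le_of_lt (lintegral_mono_ae ?_) hint
    filter_upwards [hfle] with x hx
    exact ENNReal.rpow_le_rpow hx hp.le
  refine ⟨hffin, ?_⟩
  obtain ⟨f₀, hf₀m, hff₀⟩ := hf_meas
  have hcong : ∀ ε : ℝ,
      ∫⁻ x, (ENNReal.ofReal (abs ((ntMaxOn Ω (collar Ω ε) κ u x).toReal - abs (f x)))) ^ p ∂σ
    = ∫⁻ x, (ENNReal.ofReal (abs ((ntMaxOn Ω (collar Ω ε) κ u x).toReal - abs (f₀ x)))) ^ p ∂σ := by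
    intro ε
    apply lintegral_congr_ae
    filter_upwards [hff₀] with x hx
    rw [hx]
  rw [tendsto_congr hcong]
  have h2top : ((2 : ℝ≥0∞) ^ p) ≠ ⊤ := by
    apply ENNReal.rpow_ne_top_of_nonneg hp.le
    norm_num
  have hmf₀ : Measurable fun x => (‖f₀ x‖₊ : ℝ≥0∞) := hf₀m.nnnorm.coe_nnreal_ennreal
  have hbddint : ∫⁻ x, (2 : ℝ≥0∞) ^ p *
      ((ntMaxOn Ω (collar Ω δ) κ u x) ^ p + (‖f₀ x‖₊ : ℝ≥0∞) ^ p) ∂σ ≠ ⊤ := by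
    rw [lintegral_const_mul' _ _ h2top]
    have hm1 : Measurable fun x => (ntMaxOn Ω (collar Ω δ) κ u x) ^ p :=
      (ENNReal.continuous_rpow_const.measurable).comp hNδ
    rw [lintegral_add_left hm1]
    have hint2 : ∫⁻ x, (‖f₀ x‖₊ : ℝ≥0∞) ^ p ∂σ < ⊤ := by
      have : ∫⁻ x, (‖f₀ x‖₊ : ℝ≥0∞) ^ p ∂σ = ∫⁻ x, (‖f x‖₊ : ℝ≥0∞) ^ p ∂σ := by
        apply lintegral_congr_ae
        filter_upwards [hff₀] with x hx
        rw [hx]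
      rw [this]; exact hffin
    exact ENNReal.mul_ne_top h2top (ENNReal.add_ne_top.mpr ⟨hint.ne, hint2.ne⟩)
  have hDCT := tendsto_lintegral_filter_of_dominated_convergence (μ := σ)
    (l := 𝓝[>] (0 : ℝ))
    (F := fun ε x => (ENNReal.ofReal (abs ((ntMaxOn Ω (collar Ω ε) κ u x).toReal - abs (f₀ x)))) ^ p)
    (f := fun _ => (0 : ℝ≥0∞))
    (fun x => (2 : ℝ≥0∞) ^ p * ((ntMaxOn Ω (collar Ω δ) κ u x) ^ p + (‖f₀ x‖₊ : ℝ≥0∞) ^ p))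
    (by
      apply Filter.Eventually.of_forall
      intro ε
      have h1 : Measurable fun x => (ntMaxOn Ω (collar Ω ε) κ u x).toReal :=
        (measurable_ntMaxOn hΩ.measurableSet κ (hcollar _) hu).ennreal_toReal
      have h2 : Measurable fun x => abs ((ntMaxOn Ω (collar Ω ε) κ u x).toReal - abs (f₀ x)) :=
        (h1.sub hf₀m.abs).abs
      exact (ENNReal.continuous_rpow_const.measurable).comp (ENNReal.measurable_ofReal.comp h2))
    (by
      filter_upwards [Ioo_mem_nhdsGT_of_mem ⟨le_refl (0 : ℝ), hδ⟩] with ε hε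
      apply Filter.Eventually.of_forall
      intro x
      have hstep : ENNReal.ofReal (abs ((ntMaxOn Ω (collar Ω ε) κ u x).toReal - abs (f₀ x)))
          ≤ ntMaxOn Ω (collar Ω δ) κ u x + (‖f₀ x‖₊ : ℝ≥0∞) := by
        calc ENNReal.ofReal (abs ((ntMaxOn Ω (collar Ω ε) κ u x).toReal - abs (f₀ x)))
            ≤ ENNReal.ofReal ((ntMaxOn Ω (collar Ω ε) κ u x).toReal + |f₀ x|) := by
              apply ENNReal.ofReal_le_ofReal
              have h : |(ntMaxOn Ω (collar Ω ε) κ u x).toReal - abs (f₀ x)| ≤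
                  |(ntMaxOn Ω (collar Ω ε) κ u x).toReal| + |abs (f₀ x)| := abs_sub _ _
              simpa [abs_of_nonneg ENNReal.toReal_nonneg, abs_abs] using h
          _ = ENNReal.ofReal ((ntMaxOn Ω (collar Ω ε) κ u x).toReal) + ENNReal.ofReal |f₀ x| :=
              ENNReal.ofReal_add ENNReal.toReal_nonneg (abs_nonneg _)
          _ ≤ ntMaxOn Ω (collar Ω δ) κ u x + (‖f₀ x‖₊ : ℝ≥0∞) := by
              apply add_le_add
              · exact le_trans ENNReal.ofReal_toReal_le (ntMaxOn_mono Ω κ u x hε.2.le)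
              · rw [← enorm_eq_nnnorm, Real.enorm_eq_ofReal_abs]
      calc (ENNReal.ofReal (abs ((ntMaxOn Ω (collar Ω ε) κ u x).toReal - abs (f₀ x)))) ^ p
          ≤ (ntMaxOn Ω (collar Ω δ) κ u x + (‖f₀ x‖₊ : ℝ≥0∞)) ^ p :=
            ENNReal.rpow_le_rpow hstep hp.le
        _ ≤ (2 : ℝ≥0∞) ^ p * ((ntMaxOn Ω (collar Ω δ) κ u x) ^ p + (‖f₀ x‖₊ : ℝ≥0∞) ^ p) :=
            rpow_add_le_two_rpow _ _ hp.le)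
    hbddint
    (by
      filter_upwards [hii, hff₀] with x hx hx2
      have h1 : Tendsto (fun ε : ℝ => (ntMaxOn Ω (collar Ω ε) κ u x).toReal) (𝓝[>] 0)
          (𝓝 |f₀ x|) := by
        have h := (ENNReal.tendsto_toReal (by simp : ((‖f x‖₊ : ℝ≥0∞)) ≠ ⊤)).comp hx
        have heq : ((‖f x‖₊ : ℝ≥0∞)).toReal = |f₀ x| := by
          rw [ENNReal.coe_toReal, coe_nnnorm, Real.norm_eq_abs, hx2]
        rwa [heq] at h
      have h2 : Tendsto (fun ε : ℝ => abs ((ntMaxOn Ω (collar Ω ε) κ u x).toReal - abs (f₀ x)))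
          (𝓝[>] 0) (𝓝 0) := by
        have := (h1.sub_const (abs (f₀ x))).abs
        simpa using this
      have h3 : Tendsto (fun ε : ℝ =>
          ENNReal.ofReal (abs ((ntMaxOn Ω (collar Ω ε) κ u x).toReal - abs (f₀ x))))
          (𝓝[>] 0) (𝓝 0) := by
        have := (ENNReal.continuous_ofReal.tendsto (0 : ℝ)).comp h2
        simpa [Function.comp_def] using this
      have h4 := ((ENNReal.continuous_rpow_const (y := p)).tendsto (0 : ℝ≥0∞)).comp h3
      simpa [ENNReal.zero_rpow_of_pos hp, Function.comp_def] using h4)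
  simpa using hDCT
end
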